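/- arXiv:1910.08174 — 6 statements merged into one kernel-verified Lean document; each statement's English description precedes it below -/
import Mathlib

section
/- For every r with σ_r > 0, the Hilbert–Schmidt norm errors satisfy ‖LK − LΠ_r^X K‖²_{HS(S,Y)} = Σ_{r < k ≤ s_X} σ_k² ‖Lφ_k‖²_Y and ‖LK − Π_r^Y LK‖²_{HS(S,Y)} = Σ_{r < k ≤ s_X} σ_k² ‖Lφ_k − Π_r^Y Lφ_k‖²_Y. Moreover, if s_X = ∞, then ‖LK − LΠ_r^X K‖_{HS(S,Y)} → 0 as r → ∞, and if in addition sup_r ‖Π_r^Y‖ < ∞, then ‖LK − Π_r^Y LK‖_{HS(S,Y)} → 0 as r → ∞. -/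
open Filter

/-- Abstract SVD/POD setting (0-based indexing: the paper's
`σ_k, f_k, φ_k` for `k ≥ 1` correspond to `σ (k-1)` etc.; "σ_r > 0" becomes
`∀ k < r, 0 < σ k`; "Σ_{r < k ≤ s_X}" becomes `∑' k, … (r + k) …`, the terms
with `σ = 0` vanishing).  `Π_r^X x = ∑_{k<r} (x,φ_k) φ_k` and `Π_r^Y = P r` is a
(not necessarily orthogonal) bounded projection onto `Y_r = span{Lφ_k : k < r}`.
Hilbert–Schmidt norms are computed with respect to the orthonormal basis `f` of
`S`.  Conclusions: the two exact Hilbert–Schmidt error formulas, and for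
`s_X = ∞` the convergence of the first error to `0`, and of the second provided
`sup_r ‖Π_r^Y‖ < ∞`. -/
theorem stmt2
    {𝕜 : Type*} [RCLike 𝕜]
    {S X Y : Type*}
    [NormedAddCommGroup S] [InnerProductSpace 𝕜 S] [CompleteSpace S] [SecondCountableTopology S]
    [NormedAddCommGroup X] [InnerProductSpace 𝕜 X] [CompleteSpace X] [SecondCountableTopology X]
    [NormedAddCommGroup Y] [InnerProductSpace 𝕜 Y] [CompleteSpace Y] [SecondCountableTopology Y]
    (K : S →L[𝕜] X) (hKcpt : IsCompactOperator K)
    (σ : ℕ → ℝ) (hσmono : Antitone σ) (hσnn : ∀ k, 0 ≤ σ k)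
    (f : HilbertBasis ℕ 𝕜 S) (φ : ℕ → X)
    (hφON : ∀ j k, 0 < σ j → 0 < σ k →
      (inner 𝕜 (φ j) (φ k) : 𝕜) = if j = k then 1 else 0)
    (hSVD : ∀ g : S, K g = ∑' k, ((σ k : 𝕜) * (inner 𝕜 (f k) g : 𝕜)) • φ k)
    (hKf : ∀ k, 0 < σ k → K (f k) = (σ k : 𝕜) • φ k)
    (hKadj : ∀ k, 0 < σ k →
      ContinuousLinearMap.adjoint K (φ k) = (σ k : 𝕜) • (f k : S))
    (sX : ℕ∞) (hsX : ∀ k, 0 < σ k ↔ (k : ℕ∞) < sX)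
    (L : X →ₗ[𝕜] Y)
    (hHS : Summable fun k => ‖L (K (f k))‖ ^ 2)
    (P : ℕ → Y →L[𝕜] Y)
    (hPfix : ∀ r, (∀ k < r, 0 < σ k) → ∀ k < r, P r (L (φ k)) = L (φ k))
    (hPrange : ∀ r, (∀ k < r, 0 < σ k) → ∀ y : Y,
      P r y ∈ Submodule.span 𝕜 ((fun k => L (φ k)) '' Set.Iio r)) :
    (∀ r, (∀ k < r, 0 < σ k) →
      (∑' k, ‖L (K (f k)) -
          L (∑ j ∈ Finset.range r, (inner 𝕜 (φ j) (K (f k)) : 𝕜) • φ j)‖ ^ 2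
        = ∑' k, σ (r + k) ^ 2 * ‖L (φ (r + k))‖ ^ 2)
      ∧ (∑' k, ‖L (K (f k)) - P r (L (K (f k)))‖ ^ 2
        = ∑' k, σ (r + k) ^ 2 * ‖L (φ (r + k)) - P r (L (φ (r + k)))‖ ^ 2))
    ∧ (sX = ⊤ →
        Tendsto (fun r => ∑' k, ‖L (K (f k)) -
            L (∑ j ∈ Finset.range r, (inner 𝕜 (φ j) (K (f k)) : 𝕜) • φ j)‖ ^ 2)
          atTop (nhds 0)
        ∧ ((∃ C, ∀ r, ‖P r‖ ≤ C) →
          Tendsto (fun r => ∑' k, ‖L (K (f k)) - P r (L (K (f k)))‖ ^ 2)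
            atTop (nhds 0))) := by
  classical
  have hf : ∀ j k, (inner 𝕜 (f j) (f k) : 𝕜) = if j = k then 1 else 0 :=
    orthonormal_iff_ite.mp f.orthonormal
  -- K (f k) = σ k • φ k for every k
  have hK : ∀ k, K (f k) = (σ k : 𝕜) • φ k := by
    intro k
    rw [hSVD]
    have hz : ∀ j, j ≠ k → ((σ j : 𝕜) * (inner 𝕜 (f j) (f k) : 𝕜)) • φ j = 0 := by
      intro j hj
      rw [hf j k, if_neg hj, mul_zero, zero_smul]
    rw [tsum_eq_single k hz, hf k k, if_pos rfl, mul_one]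
  have hA : ∀ k, ‖L (K (f k))‖ ^ 2 = σ k ^ 2 * ‖L (φ k)‖ ^ 2 := by
    intro k
    rw [hK k, map_smul, norm_smul, RCLike.norm_ofReal, abs_of_nonneg (hσnn k), mul_pow]
  -- uniform bound for the projected terms
  have hB : ∀ (ρ : ℕ) (C : ℝ), ‖P ρ‖ ≤ C → ∀ k,
      σ k ^ 2 * ‖L (φ k) - P ρ (L (φ k))‖ ^ 2 ≤ (1 + C) ^ 2 * ‖L (K (f k))‖ ^ 2 := by
    intro ρ C hC k
    rw [hA k]
    have h1 : ‖L (φ k) - P ρ (L (φ k))‖ ≤ (1 + C) * ‖L (φ k)‖ := by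
      calc ‖L (φ k) - P ρ (L (φ k))‖ ≤ ‖L (φ k)‖ + ‖P ρ (L (φ k))‖ := norm_sub_le _ _
        _ ≤ ‖L (φ k)‖ + ‖P ρ‖ * ‖L (φ k)‖ := by
            have := (P ρ).le_opNorm (L (φ k)); linarith
        _ ≤ (1 + C) * ‖L (φ k)‖ := by nlinarith [norm_nonneg (L (φ k))]
    have h2 : ‖L (φ k) - P ρ (L (φ k))‖ ^ 2 ≤ ((1 + C) * ‖L (φ k)‖) ^ 2 :=
      pow_le_pow_left₀ (norm_nonneg _) h1 2
    calc σ k ^ 2 * ‖L (φ k) - P ρ (L (φ k))‖ ^ 2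
        ≤ σ k ^ 2 * ((1 + C) * ‖L (φ k)‖) ^ 2 := mul_le_mul_of_nonneg_left h2 (sq_nonneg _)
      _ = (1 + C) ^ 2 * (σ k ^ 2 * ‖L (φ k)‖ ^ 2) := by ring
  have main : ∀ r, (∀ k < r, 0 < σ k) →
      ((∑' k, ‖L (K (f k)) -
          L (∑ j ∈ Finset.range r, (inner 𝕜 (φ j) (K (f k)) : 𝕜) • φ j)‖ ^ 2
        = ∑' k, σ (r + k) ^ 2 * ‖L (φ (r + k))‖ ^ 2)
      ∧ (∑' k, ‖L (K (f k)) - P r (L (K (f k)))‖ ^ 2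
        = ∑' k, σ (r + k) ^ 2 * ‖L (φ (r + k)) - P r (L (φ (r + k)))‖ ^ 2)) := by
    intro r hr
    -- first error, termwise
    have ht1 : ∀ k, ‖L (K (f k)) -
        L (∑ j ∈ Finset.range r, (inner 𝕜 (φ j) (K (f k)) : 𝕜) • φ j)‖ ^ 2
        = if k < r then 0 else ‖L (K (f k))‖ ^ 2 := by
      intro k
      by_cases hk : k < r
      · have hsum : (∑ j ∈ Finset.range r, (inner 𝕜 (φ j) (K (f k)) : 𝕜) • φ j)
            = (σ k : 𝕜) • φ k := by
          rw [Finset.sum_eq_single k]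
          · rw [hK k, inner_smul_right, hφON k k (hr k hk) (hr k hk), if_pos rfl, mul_one]
          · intro j hj hjk
            rw [hK k, inner_smul_right, hφON j k (hr j (Finset.mem_range.mp hj)) (hr k hk),
              if_neg hjk, mul_zero, zero_smul]
          · intro h; exact absurd (Finset.mem_range.mpr hk) h
        rw [if_pos hk, hsum, ← hK k, sub_self, norm_zero]
        norm_num
      · have hsum : (∑ j ∈ Finset.range r, (inner 𝕜 (φ j) (K (f k)) : 𝕜) • φ j) = 0 := by
          apply Finset.sum_eq_zero
          intro j hj
          have hj' := hr j (Finset.mem_range.mp hj)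
          rcases eq_or_lt_of_le (hσnn k) with h0 | h0
          · have hσ0 : σ k = 0 := h0.symm
            simp [hK k, hσ0]
          · rw [hK k, inner_smul_right, hφON j k hj' h0, if_neg, mul_zero, zero_smul]
            intro h
            exact hk (h ▸ Finset.mem_range.mp hj)
        rw [if_neg hk, hsum, map_zero, sub_zero]
    -- second error, termwise
    have ht2 : ∀ k, ‖L (K (f k)) - P r (L (K (f k)))‖ ^ 2
        = σ k ^ 2 * ‖L (φ k) - P r (L (φ k))‖ ^ 2 := by
      intro k
      rw [hK k, map_smul, map_smul, ← smul_sub, norm_smul, RCLike.norm_ofReal,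
        abs_of_nonneg (hσnn k), mul_pow]
    have hite2 : ∀ k, ‖L (K (f k)) - P r (L (K (f k)))‖ ^ 2
        = if k < r then 0 else σ k ^ 2 * ‖L (φ k) - P r (L (φ k))‖ ^ 2 := by
      intro k
      by_cases hk : k < r
      · rw [if_pos hk, ht2 k, hPfix r hr k hk, sub_self, norm_zero]
        norm_num
      · rw [if_neg hk]; exact ht2 k
    have hS1 : Summable (fun k => if k < r then 0 else ‖L (K (f k))‖ ^ 2) := by
      apply Summable.of_nonneg_of_le (fun k => ?_) (fun k => ?_) hHS
      · split <;> positivity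
      · split
        · positivity
        · exact le_rfl
    have hS2 : Summable (fun k => if k < r then 0 else
        σ k ^ 2 * ‖L (φ k) - P r (L (φ k))‖ ^ 2) := by
      apply Summable.of_nonneg_of_le (fun k => ?_) (fun k => ?_)
        (hHS.mul_left ((1 + ‖P r‖) ^ 2))
      · split <;> positivity
      · split
        · positivity
        · exact hB r ‖P r‖ le_rfl k
    constructor
    · calc (∑' k, ‖L (K (f k)) -
            L (∑ j ∈ Finset.range r, (inner 𝕜 (φ j) (K (f k)) : 𝕜) • φ j)‖ ^ 2)
          = ∑' k, (if k < r then 0 else ‖L (K (f k))‖ ^ 2) := tsum_congr ht1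
        _ = (∑ i ∈ Finset.range r, (if i < r then 0 else ‖L (K (f i))‖ ^ 2))
            + ∑' i, (if i + r < r then 0 else ‖L (K (f (i + r)))‖ ^ 2) :=
            (Summable.sum_add_tsum_nat_add r hS1).symm
        _ = ∑' i, ‖L (K (f (i + r)))‖ ^ 2 := by
            rw [Finset.sum_eq_zero, zero_add]
            · exact tsum_congr fun i => by rw [if_neg (by omega)]
            · intro i hi; rw [if_pos (Finset.mem_range.mp hi)]
        _ = ∑' k, σ (r + k) ^ 2 * ‖L (φ (r + k))‖ ^ 2 := by
            refine tsum_congr fun i => ?_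
            rw [add_comm i r]; exact hA (r + i)
    · calc (∑' k, ‖L (K (f k)) - P r (L (K (f k)))‖ ^ 2)
          = ∑' k, (if k < r then 0 else σ k ^ 2 * ‖L (φ k) - P r (L (φ k))‖ ^ 2) :=
            tsum_congr hite2
        _ = (∑ i ∈ Finset.range r,
              (if i < r then 0 else σ i ^ 2 * ‖L (φ i) - P r (L (φ i))‖ ^ 2))
            + ∑' i, (if i + r < r then 0 else
              σ (i + r) ^ 2 * ‖L (φ (i + r)) - P r (L (φ (i + r)))‖ ^ 2) :=
            (Summable.sum_add_tsum_nat_add r hS2).symm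
        _ = ∑' i, σ (i + r) ^ 2 * ‖L (φ (i + r)) - P r (L (φ (i + r)))‖ ^ 2 := by
            rw [Finset.sum_eq_zero, zero_add]
            · exact tsum_congr fun i => by rw [if_neg (by omega)]
            · intro i hi; rw [if_pos (Finset.mem_range.mp hi)]
        _ = ∑' k, σ (r + k) ^ 2 * ‖L (φ (r + k)) - P r (L (φ (r + k)))‖ ^ 2 := by
            exact tsum_congr fun i => by rw [add_comm i r]
  refine ⟨main, fun hsXtop => ?_⟩
  have hall : ∀ k, 0 < σ k := by
    intro k
    refine (hsX k).mpr ?_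
    rw [hsXtop]
    exact lt_top_iff_ne_top.mpr (by simp)
  have hr : ∀ r, ∀ k < r, 0 < σ k := fun r k _ => hall k
  have htail : Tendsto (fun r => ∑' k, ‖L (K (f (k + r)))‖ ^ 2) atTop (nhds 0) :=
    tendsto_sum_nat_add (fun k => ‖L (K (f k))‖ ^ 2)
  constructor
  · have heq : (fun r => ∑' k, ‖L (K (f k)) -
        L (∑ j ∈ Finset.range r, (inner 𝕜 (φ j) (K (f k)) : 𝕜) • φ j)‖ ^ 2)
        = fun r => ∑' k, ‖L (K (f (k + r)))‖ ^ 2 := by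
      funext r
      rw [(main r (hr r)).1]
      refine tsum_congr fun k => ?_
      rw [add_comm k r]; exact (hA (r + k)).symm
    rw [heq]; exact htail
  · rintro ⟨C, hC⟩
    have hC0 : (0 : ℝ) ≤ C := le_trans (norm_nonneg _) (hC 0)
    apply squeeze_zero (g := fun r => (1 + C) ^ 2 * ∑' k, ‖L (K (f (k + r)))‖ ^ 2)
    · intro r
      exact tsum_nonneg fun k => by positivity
    · intro r
      rw [(main r (hr r)).2, ← tsum_mul_left]
      have hterm : ∀ k, σ (r + k) ^ 2 * ‖L (φ (r + k)) - P r (L (φ (r + k)))‖ ^ 2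
          ≤ (1 + C) ^ 2 * ‖L (K (f (k + r)))‖ ^ 2 := by
        intro k
        rw [add_comm k r]; exact hB r C (hC r) (r + k)
      have hsr : Summable fun k => ‖L (K (f (k + r)))‖ ^ 2 :=
        (summable_nat_add_iff (f := fun k => ‖L (K (f k))‖ ^ 2) r).mpr hHS
      refine Summable.tsum_le_tsum hterm ?_ (hsr.mul_left _)
      exact Summable.of_nonneg_of_le (fun k => by positivity) hterm (hsr.mul_left _)
    · have h := htail.const_mul ((1 + C) ^ 2)
      rw [mul_zero] at h
      exact h
end

section
/- Assume in addition that L is injective, so that L^{-1} : range(L) → X exists (note Π_r^Y maps into Y_r ⊂ range(L), so L^{-1}Π_r^Y LK is well defined). Then for every r with σ_r > 0, ‖K − L^{-1}Π_r^Y LK‖²_{HS(S,X)} = Σ_{r < k ≤ s_X} σ_k² ‖φ_k − L^{-1}Π_r^Y Lφ_k‖²_X. If s_X = ∞, this quantity tends to 0 as r → ∞ provided either (i) L^{-1} is bounded and sup_r ‖Π_r^Y‖ < ∞, or (ii) the operators L^{-1}Π_r^Y L are uniformly bounded in operator norm. -/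
open Filter

/-- Shift a tsum over ℕ when the first `r` terms vanish. -/
lemma aux_tsum_shift {a : ℕ → ℝ} (r : ℕ) (h0 : ∀ k < r, a k = 0) :
    ∑' k, a k = ∑' k, a (r + k) := by
  have hcomm : (fun k => a (r + k)) = fun k => a (k + r) := by
    funext k; rw [add_comm]
  by_cases h : Summable a
  · rw [hcomm, ← Summable.sum_add_tsum_nat_add r h, Finset.sum_eq_zero, zero_add]
    intro i hi
    exact h0 i (Finset.mem_range.mp hi)
  · rw [tsum_eq_zero_of_not_summable h, tsum_eq_zero_of_not_summable]
    rw [hcomm]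
    exact fun hs => h ((summable_nat_add_iff r).mp hs)

lemma aux_summable_shift {c : ℕ → ℝ} (hc : Summable c) (r : ℕ) :
    Summable (fun k => c (r + k)) :=
  ((summable_nat_add_iff r).mpr hc).congr (fun k => by rw [add_comm])

/-- Squeeze lemma for tails. -/
lemma aux_tendsto (a : ℕ → ℕ → ℝ)
    (hnn : ∀ r k, 0 ≤ a r k) (h0 : ∀ r, ∀ k < r, a r k = 0)
    (c : ℕ → ℝ) (hc : Summable c) (r0 : ℕ) (hle : ∀ r, r0 ≤ r → ∀ k, a r k ≤ c k) :
    Tendsto (fun r => ∑' k, a r k) atTop (nhds 0) := by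
  have hctail : Tendsto (fun r => ∑' k, c (r + k)) atTop (nhds 0) :=
    (tendsto_sum_nat_add c).congr (fun r => tsum_congr fun k => by rw [add_comm])
  refine tendsto_of_tendsto_of_tendsto_of_le_of_le' tendsto_const_nhds hctail ?_ ?_
  · exact Eventually.of_forall fun r => tsum_nonneg (hnn r)
  · filter_upwards [eventually_ge_atTop r0] with r hr
    have hsum : Summable (fun k => a r k) :=
      Summable.of_nonneg_of_le (hnn r) (hle r hr) hc
    rw [aux_tsum_shift r (h0 r)]
    exact Summable.tsum_le_tsum (fun k => hle r hr (r + k))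
      (aux_summable_shift hsum r) (aux_summable_shift hc r)

/-- Same SVD/POD setting as Statement 2 (0-based indexing), with
`L` injective on its domain `D = D(L)` (encoded via a linear left inverse
`Linv` of `L` on `D`, which represents `L⁻¹ : range L → X`; since `Π_r^Y` maps
into `Y_r = span{Lφ_k : k < r} ⊆ L(D)`, the expression `Linv (P r (L x))`
represents `L⁻¹ Π_r^Y L x`).  Conclusion: the exact Hilbert–Schmidt error
formula `‖K − L⁻¹Π_r^Y L K‖²_HS = Σ_{r<k≤s_X} σ_k² ‖φ_k − L⁻¹Π_r^Y Lφ_k‖²`, and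
for `s_X = ∞` the convergence of this error to `0` provided either (i) `L⁻¹` is
bounded and `sup_r ‖Π_r^Y‖ < ∞`, or (ii) the operators `L⁻¹Π_r^Y L` are
uniformly bounded. -/
theorem stmt3
    {𝕜 : Type*} [RCLike 𝕜]
    {S X Y : Type*}
    [NormedAddCommGroup S] [InnerProductSpace 𝕜 S] [CompleteSpace S] [SecondCountableTopology S]
    [NormedAddCommGroup X] [InnerProductSpace 𝕜 X] [CompleteSpace X] [SecondCountableTopology X]
    [NormedAddCommGroup Y] [InnerProductSpace 𝕜 Y] [CompleteSpace Y] [SecondCountableTopology Y]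
    (K : S →L[𝕜] X) (hKcpt : IsCompactOperator K)
    (σ : ℕ → ℝ) (hσmono : Antitone σ) (hσnn : ∀ k, 0 ≤ σ k)
    (f : HilbertBasis ℕ 𝕜 S) (φ : ℕ → X)
    (hφON : ∀ j k, 0 < σ j → 0 < σ k →
      (inner 𝕜 (φ j) (φ k) : 𝕜) = if j = k then 1 else 0)
    (hSVD : ∀ g : S, K g = ∑' k, ((σ k : 𝕜) * (inner 𝕜 (f k) g : 𝕜)) • φ k)
    (hKf : ∀ k, 0 < σ k → K (f k) = (σ k : 𝕜) • φ k)
    (hKadj : ∀ k, 0 < σ k →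
      ContinuousLinearMap.adjoint K (φ k) = (σ k : 𝕜) • (f k : S))
    (sX : ℕ∞) (hsX : ∀ k, 0 < σ k ↔ (k : ℕ∞) < sX)
    (D : Submodule 𝕜 X) (L : X →ₗ[𝕜] Y)
    (hKD : ∀ g : S, K g ∈ D)
    (hφD : ∀ k, 0 < σ k → φ k ∈ D)
    (hHS : Summable fun k => ‖L (K (f k))‖ ^ 2)
    (Linv : Y →ₗ[𝕜] X) (hLinv : ∀ x ∈ D, Linv (L x) = x)
    (P : ℕ → Y →L[𝕜] Y)
    (hPfix : ∀ r, (∀ k < r, 0 < σ k) → ∀ k < r, P r (L (φ k)) = L (φ k))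
    (hPrange : ∀ r, (∀ k < r, 0 < σ k) → ∀ y : Y,
      P r y ∈ Submodule.span 𝕜 ((fun k => L (φ k)) '' Set.Iio r)) :
    (∀ r, (∀ k < r, 0 < σ k) →
      ∑' k, ‖K (f k) - Linv (P r (L (K (f k))))‖ ^ 2
        = ∑' k, σ (r + k) ^ 2 * ‖φ (r + k) - Linv (P r (L (φ (r + k))))‖ ^ 2)
    ∧ (sX = ⊤ →
        ((∃ C, ∀ x ∈ D, ‖x‖ ≤ C * ‖L x‖) ∧ (∃ C, ∀ r, ‖P r‖ ≤ C)
          ∨ (∃ C, ∀ r, ∀ x ∈ D, ‖Linv (P r (L x))‖ ≤ C * ‖x‖)) →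
        Tendsto (fun r => ∑' k, ‖K (f k) - Linv (P r (L (K (f k))))‖ ^ 2)
          atTop (nhds 0)) := by
  -- K f k = σ k • φ k for all k (including σ k = 0)
  have hKfφ : ∀ k, K (f k) = (σ k : 𝕜) • φ k := by
    intro k
    rcases (hσnn k).eq_or_lt with h | h
    · have h0 : K (f k) = 0 := by
        rw [hSVD (f k)]
        have hz : ∀ j, ((σ j : 𝕜) * (inner 𝕜 (f j) (f k) : 𝕜)) • φ j = 0 := by
          intro j
          rcases eq_or_ne j k with rfl | hj
          · rw [← h]; simp
          · rw [f.orthonormal.2 hj]; simp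
        rw [tsum_congr hz, tsum_zero]
      rw [h0, ← h]; simp
    · exact hKf k h
  -- Linv is a genuine inverse on the span
  have hspan : ∀ r, (∀ k < r, 0 < σ k) →
      ∀ y ∈ Submodule.span 𝕜 ((fun k => L (φ k)) '' Set.Iio r),
        Linv y ∈ D ∧ L (Linv y) = y := by
    intro r hr y hy
    induction hy using Submodule.span_induction with
    | mem x hx =>
        obtain ⟨k, hk, rfl⟩ := hx
        have hφ := hφD k (hr k hk)
        refine ⟨?_, ?_⟩ <;> rw [hLinv _ hφ]
        exact hφ
    | zero => simp
    | add u v _ _ hu hv =>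
        exact ⟨by rw [map_add]; exact D.add_mem hu.1 hv.1,
          by rw [map_add, map_add, hu.2, hv.2]⟩
    | smul c u _ hu =>
        exact ⟨by rw [map_smul]; exact D.smul_mem c hu.1,
          by rw [map_smul, map_smul, hu.2]⟩
  have hPfixspan : ∀ r, (∀ k < r, 0 < σ k) →
      ∀ y ∈ Submodule.span 𝕜 ((fun k => L (φ k)) '' Set.Iio r), P r y = y := by
    intro r hr y hy
    induction hy using Submodule.span_induction with
    | mem x hx =>
        obtain ⟨k, hk, rfl⟩ := hx
        exact hPfix r hr k hk
    | zero => simp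
    | add u v _ _ hu hv => rw [map_add, hu, hv]
    | smul c u _ hu => rw [map_smul, hu]
  have hterm : ∀ r, ∀ m,
      ‖K (f m) - Linv (P r (L (K (f m))))‖ ^ 2
        = σ m ^ 2 * ‖φ m - Linv (P r (L (φ m)))‖ ^ 2 := by
    intro r m
    rw [hKfφ m]
    have h1 : Linv (P r (L ((σ m : 𝕜) • φ m))) = (σ m : 𝕜) • Linv (P r (L (φ m))) := by
      rw [map_smul, map_smul, map_smul]
    rw [h1, ← smul_sub, norm_smul, RCLike.norm_ofReal, abs_of_nonneg (hσnn m), mul_pow]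
  have hzero : ∀ r, (∀ k < r, 0 < σ k) → ∀ k < r,
      ‖K (f k) - Linv (P r (L (K (f k))))‖ ^ 2 = 0 := by
    intro r hr k hk
    rw [hterm r k]
    have hfixk : Linv (P r (L (φ k))) = φ k := by
      rw [hPfix r hr k hk, hLinv _ (hφD k (hr k hk))]
    rw [hfixk, sub_self, norm_zero]
    ring
  constructor
  · intro r hr
    rw [aux_tsum_shift r (hzero r hr)]
    exact tsum_congr fun k => hterm r (r + k)
  · intro htop hcond
    have hpos : ∀ k, 0 < σ k := fun k =>
      (hsX k).mpr (by rw [htop]; exact Ne.lt_top (by simp))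
    have hrall : ∀ r, ∀ k < r, 0 < σ k := fun r k _ => hpos k
    have hann : ∀ r k, (0:ℝ) ≤ ‖K (f k) - Linv (P r (L (K (f k))))‖ ^ 2 :=
      fun r k => by positivity
    have hwD : ∀ r (x : X),
        Linv (P r (L x)) ∈ D ∧ L (Linv (P r (L x))) = P r (L x) :=
      fun r x => hspan r (hrall r) _ (hPrange r (hrall r) (L x))
    rcases hcond with ⟨⟨C, hC⟩, ⟨C', hC'⟩⟩ | ⟨C, hC⟩
    · -- case (i)
      set M := max C 0 with hMdef
      have hM : (0:ℝ) ≤ M := le_max_right _ _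
      have hC'0 : (0:ℝ) ≤ C' := le_trans (norm_nonneg _) (hC' 0)
      refine aux_tendsto _ hann (fun r => hzero r (hrall r))
        (fun k => (M * (1 + C')) ^ 2 * ‖L (K (f k))‖ ^ 2) (hHS.mul_left _) 0 ?_
      intro r _ k
      obtain ⟨hwmem, hLw⟩ := hwD r (K (f k))
      have hsub : K (f k) - Linv (P r (L (K (f k)))) ∈ D :=
        D.sub_mem (hKD (f k)) hwmem
      have hb : ‖K (f k) - Linv (P r (L (K (f k))))‖ ≤ M * (1 + C') * ‖L (K (f k))‖ := by
        calc ‖K (f k) - Linv (P r (L (K (f k))))‖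
            ≤ C * ‖L (K (f k) - Linv (P r (L (K (f k)))))‖ := hC _ hsub
          _ ≤ M * ‖L (K (f k) - Linv (P r (L (K (f k)))))‖ :=
              mul_le_mul_of_nonneg_right (le_max_left _ _) (norm_nonneg _)
          _ = M * ‖L (K (f k)) - P r (L (K (f k)))‖ := by rw [map_sub, hLw]
          _ ≤ M * (‖L (K (f k))‖ + ‖P r (L (K (f k)))‖) :=
              mul_le_mul_of_nonneg_left (norm_sub_le _ _) hM
          _ ≤ M * (‖L (K (f k))‖ + C' * ‖L (K (f k))‖) := by
              refine mul_le_mul_of_nonneg_left (add_le_add le_rfl ?_) hM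
              exact ((P r).le_opNorm _).trans
                (mul_le_mul_of_nonneg_right (hC' r) (norm_nonneg _))
          _ = M * (1 + C') * ‖L (K (f k))‖ := by ring
      exact (pow_le_pow_left₀ (norm_nonneg _) hb 2).trans_eq (by ring)
    · -- case (ii)
      by_cases hex : ∃ r0, Summable (fun k => ‖K (f k) - Linv (P r0 (L (K (f k))))‖ ^ 2)
      · obtain ⟨r0, hs0⟩ := hex
        set M := max C 0 with hMdef
        have hM : (0:ℝ) ≤ M := le_max_right _ _
        have hCM : ∀ r, ∀ x ∈ D, ‖Linv (P r (L x))‖ ≤ M * ‖x‖ := fun r x hx =>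
          (hC r x hx).trans (mul_le_mul_of_nonneg_right (le_max_left _ _) (norm_nonneg _))
        refine aux_tendsto _ hann (fun r => hzero r (hrall r))
          (fun k => (1 + M) ^ 2 * ‖K (f k) - Linv (P r0 (L (K (f k))))‖ ^ 2)
          (hs0.mul_left _) r0 ?_
        intro r hr k
        obtain ⟨hw0mem, hLw0⟩ := hwD r0 (K (f k))
        have hu : K (f k) - Linv (P r0 (L (K (f k)))) ∈ D :=
          D.sub_mem (hKD (f k)) hw0mem
        have hfixP : P r (P r0 (L (K (f k)))) = P r0 (L (K (f k))) := by
          apply hPfixspan r (hrall r)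
          refine Submodule.span_mono ?_ (hPrange r0 (hrall r0) (L (K (f k))))
          exact Set.image_mono (Set.Iio_subset_Iio hr)
        have hkey : K (f k) - Linv (P r (L (K (f k))))
            = (K (f k) - Linv (P r0 (L (K (f k)))))
              - Linv (P r (L (K (f k) - Linv (P r0 (L (K (f k))))))) := by
          rw [map_sub L, hLw0, map_sub (P r), hfixP, map_sub Linv]
          abel
        have hb : ‖K (f k) - Linv (P r (L (K (f k))))‖
            ≤ (1 + M) * ‖K (f k) - Linv (P r0 (L (K (f k))))‖ := by
          rw [hkey]
          calc ‖(K (f k) - Linv (P r0 (L (K (f k)))))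
                - Linv (P r (L (K (f k) - Linv (P r0 (L (K (f k)))))))‖
              ≤ ‖K (f k) - Linv (P r0 (L (K (f k))))‖
                + ‖Linv (P r (L (K (f k) - Linv (P r0 (L (K (f k)))))))‖ :=
                norm_sub_le _ _
            _ ≤ ‖K (f k) - Linv (P r0 (L (K (f k))))‖
                + M * ‖K (f k) - Linv (P r0 (L (K (f k))))‖ :=
                add_le_add le_rfl (hCM r _ hu)
            _ = (1 + M) * ‖K (f k) - Linv (P r0 (L (K (f k))))‖ := by ring
        exact (pow_le_pow_left₀ (norm_nonneg _) hb 2).trans_eq (by ring)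
      · push_neg at hex
        refine tendsto_const_nhds.congr fun r => ?_
        exact (tsum_eq_zero_of_not_summable (hex r)).symm
end

section
/- For every r with σ_r > 0, the discrete POD data approximation errors satisfy Σ_{j=1}^s γ_j ‖Lw_j − LΠ_r^X w_j‖²_Y = Σ_{k=r+1}^{s_X} σ_k² ‖Lφ_k‖²_Y and Σ_{j=1}^s γ_j ‖Lw_j − Π_r^Y Lw_j‖²_Y = Σ_{k=r+1}^{s_X} σ_k² ‖Lφ_k − Π_r^Y Lφ_k‖²_Y. -/
private lemma pod_sum_lemma {𝕜 Y : Type*} [RCLike 𝕜] [NormedAddCommGroup Y]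
    [InnerProductSpace 𝕜 Y]
    (s : ℕ) (γ : Fin s → ℝ) (c : Fin s → Fin s → 𝕜)
    (hc : ∀ k l, ∑ j, (γ j : 𝕜) * (starRingEnd 𝕜) (c j k) * (c j l)
      = if k = l then 1 else 0)
    (t : Fin s → 𝕜) (v : Fin s → Y) :
    ∑ j, γ j * ‖∑ k, (t k * c j k) • v k‖ ^ 2 = ∑ k, ‖t k‖ ^ 2 * ‖v k‖ ^ 2 := by
  have expand : ∀ j : Fin s,
      (inner 𝕜 (∑ k, (t k * c j k) • v k) (∑ k, (t k * c j k) • v k) : 𝕜)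
      = ∑ k, ∑ l, (starRingEnd 𝕜) (t k) * (starRingEnd 𝕜) (c j k) * t l * c j l
          * (inner 𝕜 (v k) (v l) : 𝕜) := by
    intro j
    rw [sum_inner]
    refine Finset.sum_congr rfl fun k _ => ?_
    rw [inner_smul_left, inner_sum, Finset.mul_sum]
    refine Finset.sum_congr rfl fun l _ => ?_
    rw [inner_smul_right, map_mul]
    ring
  have key : ∑ j, (γ j : 𝕜) * (inner 𝕜 (∑ k, (t k * c j k) • v k) (∑ k, (t k * c j k) • v k) : 𝕜)
      = ∑ k, (starRingEnd 𝕜) (t k) * t k * (inner 𝕜 (v k) (v k) : 𝕜) := by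
    calc ∑ j, (γ j : 𝕜) * (inner 𝕜 (∑ k, (t k * c j k) • v k) (∑ k, (t k * c j k) • v k) : 𝕜)
        = ∑ k, ∑ l, ((starRingEnd 𝕜) (t k) * t l * (inner 𝕜 (v k) (v l) : 𝕜))
            * (∑ j, (γ j : 𝕜) * (starRingEnd 𝕜) (c j k) * (c j l)) := by
          simp_rw [expand, Finset.mul_sum]
          rw [Finset.sum_comm]
          refine Finset.sum_congr rfl fun k _ => ?_
          rw [Finset.sum_comm]
          refine Finset.sum_congr rfl fun l _ => ?_
          exact Finset.sum_congr rfl fun j _ => by ring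
      _ = ∑ k, (starRingEnd 𝕜) (t k) * t k * (inner 𝕜 (v k) (v k) : 𝕜) := by
          simp_rw [hc, mul_ite, mul_one, mul_zero]
          refine Finset.sum_congr rfl fun k _ => ?_
          simp
  have h2 := congrArg (RCLike.re (K := 𝕜)) key
  rw [map_sum, map_sum] at h2
  calc ∑ j, γ j * ‖∑ k, (t k * c j k) • v k‖ ^ 2
      = ∑ j, RCLike.re ((γ j : 𝕜) *
          (inner 𝕜 (∑ k, (t k * c j k) • v k) (∑ k, (t k * c j k) • v k) : 𝕜)) := by
        refine Finset.sum_congr rfl fun j _ => ?_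
        rw [RCLike.re_ofReal_mul, inner_self_eq_norm_sq]
    _ = ∑ k, ‖t k‖ ^ 2 * ‖v k‖ ^ 2 := by
        rw [h2]
        refine Finset.sum_congr rfl fun k _ => ?_
        rw [RCLike.conj_mul]
        rw [show ((‖t k‖ : 𝕜) ^ 2) = ((‖t k‖ ^ 2 : ℝ) : 𝕜) by push_cast; ring]
        rw [RCLike.re_ofReal_mul, inner_self_eq_norm_sq]

/-- Discrete POD setting: `S = 𝕜^s` with the weighted inner
product `(u,v)_S = Σ_j γ_j u_j conj(v_j)` (realised by a basis `b` of an
abstract Hilbert space `S`; Mathlib's `inner` is conjugate linear in the first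
slot), snapshots `w_j ∈ X`, POD operator `K f = Σ_j γ_j f_j w_j` with SVD
`K g = Σ_k σ_k (g,f_k)_S φ_k` (0-based indexing, `σ` extended by zero beyond
`s`; the paper's "σ_r > 0" is `∀ k < r, 0 < σ k`, and "Σ_{k=r+1}^{s_X}" is the
sum over indices `k` with `r ≤ k`, the terms with `σ_k = 0` vanishing).
`Π_r^X x = Σ_{k<r} (x,φ_k) φ_k` and `P = Π_r^Y` is a bounded projection onto
`Y_r = span{Lφ_k : k < r}`.  Conclusions: the two exact discrete POD data
approximation error formulas. -/
theorem stmt7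
    {𝕜 : Type*} [RCLike 𝕜]
    {X Y S : Type*}
    [NormedAddCommGroup X] [InnerProductSpace 𝕜 X] [CompleteSpace X] [SecondCountableTopology X]
    [NormedAddCommGroup Y] [InnerProductSpace 𝕜 Y] [CompleteSpace Y] [SecondCountableTopology Y]
    [NormedAddCommGroup S] [InnerProductSpace 𝕜 S] [CompleteSpace S]
    (s : ℕ) (hs : 0 < s)
    (b : Module.Basis (Fin s) 𝕜 S)
    (γ : Fin s → ℝ) (hγ : ∀ j, 0 < γ j)
    (hinner : ∀ u v : S, (inner 𝕜 u v : 𝕜) =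
      ∑ j, (γ j : 𝕜) * (starRingEnd 𝕜) (b.repr u j) * (b.repr v j))
    (w : Fin s → X)
    (K : S →L[𝕜] X)
    (hK : ∀ g : S, K g = ∑ j, ((γ j : 𝕜) * (b.repr g j)) • w j)
    (σ : ℕ → ℝ) (hσmono : Antitone σ) (hσnn : ∀ k, 0 ≤ σ k)
    (hσs : ∀ k, s ≤ k → σ k = 0)
    (f : OrthonormalBasis (Fin s) 𝕜 S)
    (φ : ℕ → X)
    (hφON : ∀ j k, 0 < σ j → 0 < σ k →
      (inner 𝕜 (φ j) (φ k) : 𝕜) = if j = k then 1 else 0)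
    (hSVD : ∀ g : S, K g = ∑ k : Fin s, ((σ (k : ℕ) : 𝕜) * (inner 𝕜 (f k) g : 𝕜)) • φ (k : ℕ))
    (hKf : ∀ k : Fin s, 0 < σ (k : ℕ) → K (f k) = (σ (k : ℕ) : 𝕜) • φ (k : ℕ))
    (hKadj : ∀ k : Fin s, 0 < σ (k : ℕ) →
      ContinuousLinearMap.adjoint K (φ (k : ℕ)) = (σ (k : ℕ) : 𝕜) • f k)
    (sX : ℕ) (hsX : ∀ k, 0 < σ k ↔ k < sX)
    (L : X →ₗ[𝕜] Y)
    (r : ℕ) (hr : ∀ k < r, 0 < σ k)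
    (P : Y →L[𝕜] Y)
    (hPfix : ∀ k < r, P (L (φ k)) = L (φ k))
    (hPrange : ∀ y : Y, P y ∈ Submodule.span 𝕜 ((fun k => L (φ k)) '' Set.Iio r)) :
    (∑ j, γ j * ‖L (w j) -
        L (∑ k ∈ Finset.range r, (inner 𝕜 (φ k) (w j) : 𝕜) • φ k)‖ ^ 2
      = ∑ k : Fin s, if r ≤ (k : ℕ) then σ (k : ℕ) ^ 2 * ‖L (φ (k : ℕ))‖ ^ 2 else 0)
    ∧ (∑ j, γ j * ‖L (w j) - P (L (w j))‖ ^ 2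
      = ∑ k : Fin s, if r ≤ (k : ℕ) then
          σ (k : ℕ) ^ 2 * ‖L (φ (k : ℕ)) - P (L (φ (k : ℕ)))‖ ^ 2 else 0) := by
  classical
  -- r ≤ s
  have hrs : r ≤ s := by
    by_contra h
    push_neg at h
    exact absurd (hσs s le_rfl) (ne_of_gt (hr s h))
  -- the unit vectors e j
  set e : Fin s → S := fun j => ((γ j : 𝕜)⁻¹) • b j with he
  have hγ0 : ∀ j, (γ j : 𝕜) ≠ 0 := fun j => by
    exact_mod_cast RCLike.ofReal_ne_zero.mpr (ne_of_gt (hγ j))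
  have hrepr : ∀ j i, b.repr (e j) i = if j = i then (γ j : 𝕜)⁻¹ else 0 := by
    intro j i
    simp [he, Module.Basis.repr_self, Finsupp.single_apply]
  -- K e j = w j
  have hKe : ∀ j, K (e j) = w j := by
    intro j
    rw [hK]
    rw [Finset.sum_eq_single j]
    · rw [hrepr]; simp [hγ0 j, mul_inv_cancel₀ (hγ0 j)]
    · intro i _ hij
      rw [hrepr]
      simp [Ne.symm hij]
    · simp
  -- coefficients
  set c : Fin s → Fin s → 𝕜 := fun j k => (starRingEnd 𝕜) (b.repr (f k) j) with hcdef
  have hfe : ∀ (k j : Fin s), (inner 𝕜 (f k) (e j) : 𝕜) = c j k := by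
    intro k j
    rw [hinner]
    rw [Finset.sum_eq_single j]
    · rw [hrepr, if_pos rfl, mul_right_comm, mul_inv_cancel₀ (hγ0 j), one_mul]
    · intro i _ hij
      rw [hrepr]
      simp [Ne.symm hij]
    · simp
  -- orthonormality of columns
  have hc : ∀ k l, ∑ j, (γ j : 𝕜) * (starRingEnd 𝕜) (c j k) * (c j l)
      = if k = l then 1 else 0 := by
    intro k l
    have h1 : (inner 𝕜 (f k) (f l) : 𝕜) = if k = l then 1 else 0 := by
      rw [orthonormal_iff_ite.mp f.orthonormal]
    have h2 := hinner (f k) (f l)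
    rw [h1] at h2
    have h3 := congrArg (starRingEnd 𝕜) h2
    rw [map_sum] at h3
    calc ∑ j, (γ j : 𝕜) * (starRingEnd 𝕜) (c j k) * (c j l)
        = ∑ j, (starRingEnd 𝕜) ((γ j : 𝕜) * (starRingEnd 𝕜) (b.repr (f k) j) * (b.repr (f l) j)) := by
          refine Finset.sum_congr rfl fun j _ => ?_
          simp only [hcdef, map_mul, RCLike.conj_ofReal, RingHomCompTriple.comp_apply,
            RingHom.id_apply, starRingEnd_self_apply]
          try ring
      _ = if k = l then 1 else 0 := by
          rw [← h3]
          by_cases hkl : k = l <;> simp [hkl]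
  -- SVD expansion of w j
  have hw : ∀ j, w j = ∑ k : Fin s, ((σ (k : ℕ) : 𝕜) * c j k) • φ (k : ℕ) := by
    intro j
    rw [← hKe j, hSVD]
    exact Finset.sum_congr rfl fun k _ => by rw [hfe]
  -- inner products with φ for k < r
  have hφw : ∀ (j : Fin s) (k : ℕ) (hk : k < r),
      (inner 𝕜 (φ k) (w j) : 𝕜) = (σ k : 𝕜) * c j ⟨k, lt_of_lt_of_le hk hrs⟩ := by
    intro j k hk
    have hks : k < s := lt_of_lt_of_le hk hrs
    have hσk : 0 < σ k := hr k hk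
    have : (inner 𝕜 (φ k) (w j) : 𝕜) = inner 𝕜 (ContinuousLinearMap.adjoint K (φ k)) (e j) := by
      rw [ContinuousLinearMap.adjoint_inner_left, hKe]
    rw [this, hKadj ⟨k, hks⟩ hσk, inner_smul_left, RCLike.conj_ofReal, hfe]
  -- the L-difference, first projection
  set t : Fin s → 𝕜 := fun k => if r ≤ (k : ℕ) then (σ (k : ℕ) : 𝕜) else 0 with htdef
  have hdiff1 : ∀ j, L (w j) - L (∑ k ∈ Finset.range r, (inner 𝕜 (φ k) (w j) : 𝕜) • φ k)
      = ∑ k : Fin s, (t k * c j k) • L (φ (k : ℕ)) := by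
    intro j
    have hproj : (∑ k ∈ Finset.range r, (inner 𝕜 (φ k) (w j) : 𝕜) • φ k)
        = ∑ k : Fin s, (if (k : ℕ) < r then ((σ (k : ℕ) : 𝕜) * c j k) • φ (k : ℕ) else 0) := by
      rw [← Finset.sum_filter]
      refine Finset.sum_bij'
        (fun (k : ℕ) (hk : k ∈ Finset.range r) =>
          (⟨k, lt_of_lt_of_le (Finset.mem_range.mp hk) hrs⟩ : Fin s))
        (fun (k : Fin s) _ => (k : ℕ)) ?_ ?_ ?_ ?_ ?_
      · intro a ha
        simpa using Finset.mem_range.mp ha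
      · intro a ha
        simp only [Finset.mem_filter, Finset.mem_univ, true_and] at ha
        exact Finset.mem_range.mpr ha
      · intro a ha; rfl
      · intro a ha; rfl
      · intro a ha
        rw [hφw j a (Finset.mem_range.mp ha)]
    rw [hproj, hw j, map_sum, map_sum, ← Finset.sum_sub_distrib]
    refine Finset.sum_congr rfl fun k _ => ?_
    by_cases hlt : (k : ℕ) < r
    · have ht : t k = 0 := by simp [htdef, not_le.mpr hlt]
      rw [if_pos hlt, ht, map_smul, sub_self, zero_mul, zero_smul]
    · have ht : t k = (σ (k : ℕ) : 𝕜) := by simp [htdef, not_lt.mp hlt]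
      rw [if_neg hlt, map_zero, sub_zero, map_smul, ht]
  have hdiff2 : ∀ j, L (w j) - P (L (w j))
      = ∑ k : Fin s, (t k * c j k) • (L (φ (k : ℕ)) - P (L (φ (k : ℕ)))) := by
    intro j
    rw [hw j, map_sum, map_sum, ← Finset.sum_sub_distrib]
    refine Finset.sum_congr rfl fun k _ => ?_
    rw [map_smul, map_smul]
    by_cases hlt : (k : ℕ) < r
    · have ht : t k = 0 := by simp [htdef, not_le.mpr hlt]
      simp [ht, hPfix (k : ℕ) hlt]
    · have ht : t k = (σ (k : ℕ) : 𝕜) := by simp [htdef, not_lt.mp hlt]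
      rw [ht, smul_sub]
  have htn : ∀ k : Fin s, ‖t k‖ ^ 2 = if r ≤ (k : ℕ) then σ (k : ℕ) ^ 2 else 0 := by
    intro k
    by_cases hle : r ≤ (k : ℕ)
    · simp only [htdef, if_pos hle, RCLike.norm_ofReal]
      rw [sq_abs]
    · simp [htdef, hle]
  constructor
  · calc ∑ j, γ j * ‖L (w j) -
        L (∑ k ∈ Finset.range r, (inner 𝕜 (φ k) (w j) : 𝕜) • φ k)‖ ^ 2
        = ∑ j, γ j * ‖∑ k : Fin s, (t k * c j k) • L (φ (k : ℕ))‖ ^ 2 := by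
          refine Finset.sum_congr rfl fun j _ => ?_
          rw [hdiff1 j]
      _ = ∑ k : Fin s, ‖t k‖ ^ 2 * ‖L (φ (k : ℕ))‖ ^ 2 :=
          pod_sum_lemma s γ c hc t (fun k => L (φ (k : ℕ)))
      _ = ∑ k : Fin s, if r ≤ (k : ℕ) then σ (k : ℕ) ^ 2 * ‖L (φ (k : ℕ))‖ ^ 2 else 0 := by
          refine Finset.sum_congr rfl fun k _ => ?_
          rw [htn k, ite_mul, zero_mul]
  · calc ∑ j, γ j * ‖L (w j) - P (L (w j))‖ ^ 2
        = ∑ j, γ j * ‖∑ k : Fin s, (t k * c j k) • (L (φ (k : ℕ)) - P (L (φ (k : ℕ))))‖ ^ 2 := by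
          refine Finset.sum_congr rfl fun j _ => ?_
          rw [hdiff2 j]
      _ = ∑ k : Fin s, ‖t k‖ ^ 2 * ‖L (φ (k : ℕ)) - P (L (φ (k : ℕ)))‖ ^ 2 :=
          pod_sum_lemma s γ c hc t (fun k => L (φ (k : ℕ)) - P (L (φ (k : ℕ))))
      _ = ∑ k : Fin s, if r ≤ (k : ℕ) then
            σ (k : ℕ) ^ 2 * ‖L (φ (k : ℕ)) - P (L (φ (k : ℕ)))‖ ^ 2 else 0 := by
          refine Finset.sum_congr rfl fun k _ => ?_
          rw [htn k, ite_mul, zero_mul]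
end

section
/- If in addition L is injective (so L^{-1} : range(L) → X exists, and L^{-1}Π_r^Y Lw_j is well defined since Π_r^Y maps into Y_r ⊂ range(L)), then for every r with σ_r > 0, Σ_{j=1}^s γ_j ‖w_j − L^{-1}Π_r^Y Lw_j‖²_X = Σ_{k=r+1}^{s_X} σ_k² ‖φ_k − L^{-1}Π_r^Y Lφ_k‖²_X. -/
lemma sum_norm_sq_map_eq {𝕜 X S : Type*} [RCLike 𝕜] [NormedAddCommGroup X] [InnerProductSpace 𝕜 X]
    [NormedAddCommGroup S] [InnerProductSpace 𝕜 S] {n : ℕ}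
    (c f : OrthonormalBasis (Fin n) 𝕜 S) (A : S →ₗ[𝕜] X) :
    ∑ j, ‖A (c j)‖ ^ 2 = ∑ k, ‖A (f k)‖ ^ 2 := by
  have key : ∑ j, (inner 𝕜 (A (c j)) (A (c j)) : 𝕜) = ∑ k, (inner 𝕜 (A (f k)) (A (f k)) : 𝕜) := by
    have hrep : ∀ j, A (c j) = ∑ k, (inner 𝕜 (f k) (c j) : 𝕜) • A (f k) := by
      intro j
      conv_lhs => rw [← f.sum_repr' (c j)]
      simp [map_sum, map_smul]
    calc ∑ j, (inner 𝕜 (A (c j)) (A (c j)) : 𝕜)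
        = ∑ j, ∑ k, ∑ l, ((starRingEnd 𝕜) (inner 𝕜 (f k) (c j) : 𝕜) * (inner 𝕜 (f l) (c j) : 𝕜))
            * (inner 𝕜 (A (f k)) (A (f l)) : 𝕜) := by
          refine Finset.sum_congr rfl fun j _ => ?_
          rw [hrep j, sum_inner]
          refine Finset.sum_congr rfl fun k _ => ?_
          rw [inner_sum]
          refine Finset.sum_congr rfl fun l _ => ?_
          rw [inner_smul_left, inner_smul_right]
          ring
      _ = ∑ k, ∑ l, (∑ j, (inner 𝕜 (f l) (c j) : 𝕜) * (inner 𝕜 (c j) (f k) : 𝕜))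
            * (inner 𝕜 (A (f k)) (A (f l)) : 𝕜) := by
          rw [Finset.sum_comm]
          refine Finset.sum_congr rfl fun k _ => ?_
          rw [Finset.sum_comm]
          refine Finset.sum_congr rfl fun l _ => ?_
          rw [Finset.sum_mul]
          refine Finset.sum_congr rfl fun j _ => ?_
          rw [← inner_conj_symm (c j) (f k)]
          ring
      _ = ∑ k, (inner 𝕜 (A (f k)) (A (f k)) : 𝕜) := by
          refine Finset.sum_congr rfl fun k _ => ?_
          have : ∀ l, (∑ j, (inner 𝕜 (f l) (c j) : 𝕜) * (inner 𝕜 (c j) (f k) : 𝕜)) =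
              if k = l then 1 else 0 := by
            intro l
            rw [c.sum_inner_mul_inner (f l) (f k)]
            rw [(orthonormal_iff_ite.mp f.orthonormal) l k]
            simp [eq_comm]
          simp only [this]
          simp
  have h2 : ∀ x : X, (‖x‖ : 𝕜) ^ 2 = inner 𝕜 x x := fun x => (inner_self_eq_norm_sq_to_K x).symm
  simp only [← h2] at key
  have h3 : ((∑ j, ‖A (c j)‖ ^ 2 : ℝ) : 𝕜) = ((∑ k, ‖A (f k)‖ ^ 2 : ℝ) : 𝕜) := by
    push_cast
    exact key
  exact_mod_cast h3

/-- Discrete POD setting as in Statement 7, with `L` injective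
on its domain `D = D(L)` (so `L⁻¹ : range L → X` exists; it is encoded by a
linear left inverse `Linv` of `L` on `D`, and `L⁻¹Π_r^Y L w_j` is well defined
because `Π_r^Y` maps into `Y_r = span{Lφ_k : k < r} ⊆ L(D)`).  Conclusion:
`Σ_j γ_j ‖w_j − L⁻¹Π_r^Y L w_j‖²_X = Σ_{k=r+1}^{s_X} σ_k² ‖φ_k − L⁻¹Π_r^Y Lφ_k‖²_X`
(0-based indexing, trailing `σ_k = 0` terms vanishing). -/
theorem stmt8
    {𝕜 : Type*} [RCLike 𝕜]
    {X Y S : Type*}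
    [NormedAddCommGroup X] [InnerProductSpace 𝕜 X] [CompleteSpace X] [SecondCountableTopology X]
    [NormedAddCommGroup Y] [InnerProductSpace 𝕜 Y] [CompleteSpace Y] [SecondCountableTopology Y]
    [NormedAddCommGroup S] [InnerProductSpace 𝕜 S] [CompleteSpace S]
    (s : ℕ) (hs : 0 < s)
    (b : Module.Basis (Fin s) 𝕜 S)
    (γ : Fin s → ℝ) (hγ : ∀ j, 0 < γ j)
    (hinner : ∀ u v : S, (inner 𝕜 u v : 𝕜) =
      ∑ j, (γ j : 𝕜) * (starRingEnd 𝕜) (b.repr u j) * (b.repr v j))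
    (w : Fin s → X)
    (K : S →L[𝕜] X)
    (hK : ∀ g : S, K g = ∑ j, ((γ j : 𝕜) * (b.repr g j)) • w j)
    (σ : ℕ → ℝ) (hσmono : Antitone σ) (hσnn : ∀ k, 0 ≤ σ k)
    (hσs : ∀ k, s ≤ k → σ k = 0)
    (f : OrthonormalBasis (Fin s) 𝕜 S)
    (φ : ℕ → X)
    (hφON : ∀ j k, 0 < σ j → 0 < σ k →
      (inner 𝕜 (φ j) (φ k) : 𝕜) = if j = k then 1 else 0)
    (hSVD : ∀ g : S, K g = ∑ k : Fin s, ((σ (k : ℕ) : 𝕜) * (inner 𝕜 (f k) g : 𝕜)) • φ (k : ℕ))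
    (hKf : ∀ k : Fin s, 0 < σ (k : ℕ) → K (f k) = (σ (k : ℕ) : 𝕜) • φ (k : ℕ))
    (hKadj : ∀ k : Fin s, 0 < σ (k : ℕ) →
      ContinuousLinearMap.adjoint K (φ (k : ℕ)) = (σ (k : ℕ) : 𝕜) • f k)
    (sX : ℕ) (hsX : ∀ k, 0 < σ k ↔ k < sX)
    (D : Submodule 𝕜 X) (L : X →ₗ[𝕜] Y)
    (hwD : ∀ j, w j ∈ D)
    (hφD : ∀ k, 0 < σ k → φ k ∈ D)
    (Linv : Y →ₗ[𝕜] X) (hLinv : ∀ x ∈ D, Linv (L x) = x)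
    (r : ℕ) (hr : ∀ k < r, 0 < σ k)
    (P : Y →L[𝕜] Y)
    (hPfix : ∀ k < r, P (L (φ k)) = L (φ k))
    (hPrange : ∀ y : Y, P y ∈ Submodule.span 𝕜 ((fun k => L (φ k)) '' Set.Iio r)) :
    ∑ j, γ j * ‖w j - Linv (P (L (w j)))‖ ^ 2
      = ∑ k : Fin s, if r ≤ (k : ℕ) then
          σ (k : ℕ) ^ 2 * ‖φ (k : ℕ) - Linv (P (L (φ (k : ℕ))))‖ ^ 2 else 0 := by
  classical
  -- The error operator T = id - Linv ∘ P ∘ L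
  set T : X →ₗ[𝕜] X :=
    LinearMap.id - Linv ∘ₗ ((P : Y →ₗ[𝕜] Y) ∘ₗ L) with hT
  have hTapp : ∀ x : X, T x = x - Linv (P (L x)) := by
    intro x; simp [hT]
  -- T kills φ k for k < r
  have hTφ : ∀ k < r, T (φ k) = 0 := by
    intro k hk
    rw [hTapp, hPfix k hk, hLinv _ (hφD k (hr k hk)), sub_self]
  -- A = T ∘ K
  set A : S →ₗ[𝕜] X := T ∘ₗ (K : S →ₗ[𝕜] X) with hA
  -- K (f k) = σ k • φ k for all k
  have hKfall : ∀ k : Fin s, K (f k) = ((σ (k : ℕ) : 𝕜)) • φ (k : ℕ) := by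
    intro k
    rw [hSVD (f k)]
    rw [Finset.sum_eq_single k]
    · rw [(orthonormal_iff_ite.mp f.orthonormal) k k]; simp
    · intro m _ hm
      rw [(orthonormal_iff_ite.mp f.orthonormal) m k]
      simp [hm]
    · simp
  -- K (b j) = γ j • w j
  have hKb : ∀ j : Fin s, K (b j) = ((γ j : 𝕜)) • w j := by
    intro j
    rw [hK (b j)]
    rw [Finset.sum_eq_single j]
    · simp [Module.Basis.repr_self]
    · intro m _ hm
      simp [Module.Basis.repr_self, Finsupp.single_apply, (Ne.symm hm) ]
    · simp
  -- the rescaled orthonormal basis c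
  have hsqrt_ne : ∀ j : Fin s, ((Real.sqrt (γ j))⁻¹ : 𝕜) ≠ 0 := by
    intro j
    simp only [ne_eq, RCLike.ofReal_eq_zero, inv_eq_zero]
    exact ne_of_gt (Real.sqrt_pos.mpr (hγ j))
  set u : Fin s → 𝕜ˣ := fun j => Units.mk0 _ (hsqrt_ne j) with hu
  set b' : Module.Basis (Fin s) 𝕜 S := b.unitsSMul u with hb'
  have hb'app : ∀ j, b' j = ((Real.sqrt (γ j))⁻¹ : 𝕜) • b j := by
    intro j; rw [hb', Module.Basis.unitsSMul_apply]; rfl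
  have hb'on : Orthonormal 𝕜 b' := by
    rw [orthonormal_iff_ite]
    intro i j
    rw [hb'app, hb'app, hinner]
    have hrep : ∀ (i : Fin s) (m : Fin s),
        b.repr (((Real.sqrt (γ i))⁻¹ : 𝕜) • b i) m
          = if i = m then ((Real.sqrt (γ i))⁻¹ : 𝕜) else 0 := by
      intro i m
      rw [map_smul]
      simp [Module.Basis.repr_self, Finsupp.single_apply]
    simp only [hrep]
    rcases eq_or_ne i j with h | h
    · subst h
      rw [Finset.sum_eq_single i]
      · simp only [if_true]
        rw [map_inv₀, RCLike.conj_ofReal]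
        have h1 : (γ i : ℝ) * ((Real.sqrt (γ i))⁻¹ * (Real.sqrt (γ i))⁻¹) = 1 := by
          rw [← mul_inv, Real.mul_self_sqrt (hγ i).le, mul_inv_cancel₀ (hγ i).ne']
        calc ((γ i : ℝ) : 𝕜) * ((Real.sqrt (γ i) : ℝ) : 𝕜)⁻¹ * ((Real.sqrt (γ i) : ℝ) : 𝕜)⁻¹
            = (((γ i : ℝ) * ((Real.sqrt (γ i))⁻¹ * (Real.sqrt (γ i))⁻¹) : ℝ) : 𝕜) := by
              push_cast; ring
          _ = 1 := by rw [h1]; simp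
      · intro m _ hm
        simp [Ne.symm hm]
      · simp
    · rw [if_neg h, Finset.sum_eq_zero]
      intro m _
      rcases eq_or_ne i m with h1 | h1
      · subst h1
        simp [Ne.symm h]  -- j ≠ i so second factor 0... careful
      · simp [h1]
  set c : OrthonormalBasis (Fin s) 𝕜 S := b'.toOrthonormalBasis hb'on with hc
  have hcapp : ∀ j, c j = ((Real.sqrt (γ j))⁻¹ : 𝕜) • b j := by
    intro j; rw [hc, Module.Basis.coe_toOrthonormalBasis, hb'app]
  -- ‖A (c j)‖² = γ j ‖T (w j)‖²
  have hAc : ∀ j, ‖A (c j)‖ ^ 2 = γ j * ‖T (w j)‖ ^ 2 := by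
    intro j
    have : A (c j) = ((Real.sqrt (γ j) : ℝ) : 𝕜) • T (w j) := by
      rw [hA, LinearMap.comp_apply, ContinuousLinearMap.coe_coe, hcapp, map_smul, hKb,
        smul_smul, map_smul]
      congr 1
      have h2 : (Real.sqrt (γ j))⁻¹ * γ j = Real.sqrt (γ j) := by
        rw [eq_comm, eq_inv_mul_iff_mul_eq₀ (Real.sqrt_pos.mpr (hγ j)).ne',
          Real.mul_self_sqrt (hγ j).le]
      calc ((Real.sqrt (γ j) : ℝ) : 𝕜)⁻¹ * ((γ j : ℝ) : 𝕜)
          = (((Real.sqrt (γ j))⁻¹ * γ j : ℝ) : 𝕜) := by push_cast; ring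
        _ = _ := by rw [h2]
    rw [this, norm_smul]
    rw [mul_pow]
    congr 1
    rw [RCLike.norm_ofReal, abs_of_nonneg (Real.sqrt_nonneg _), Real.sq_sqrt (le_of_lt (hγ j))]
  -- ‖A (f k)‖² = σ k ² ‖T (φ k)‖²
  have hAf : ∀ k : Fin s, ‖A (f k)‖ ^ 2 = σ (k : ℕ) ^ 2 * ‖T (φ (k : ℕ))‖ ^ 2 := by
    intro k
    rw [hA, LinearMap.comp_apply, ContinuousLinearMap.coe_coe, hKfall, map_smul, norm_smul,
      mul_pow]
    congr 1
    rw [RCLike.norm_ofReal, sq_abs]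
  have main := sum_norm_sq_map_eq c f A
  calc ∑ j, γ j * ‖w j - Linv (P (L (w j)))‖ ^ 2
      = ∑ j, ‖A (c j)‖ ^ 2 := by
        refine Finset.sum_congr rfl fun j _ => ?_
        rw [hAc j, hTapp]
    _ = ∑ k, ‖A (f k)‖ ^ 2 := main
    _ = ∑ k : Fin s, if r ≤ (k : ℕ) then
          σ (k : ℕ) ^ 2 * ‖φ (k : ℕ) - Linv (P (L (φ (k : ℕ))))‖ ^ 2 else 0 := by
        refine Finset.sum_congr rfl fun k _ => ?_
        rw [hAf k]
        by_cases hk : r ≤ (k : ℕ)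
        · rw [if_pos hk, hTapp]
        · rw [if_neg hk, hTφ _ (lt_of_not_ge hk)]
          simp
end

section
/- Assume additionally that L is injective and the L^{-1} assumption holds: either s_X < ∞, or L^{-1}Π_r^Y LK f = Σ_{j=1}^m ∫_𝒪 f_j(t) (L^{-1}Π_r^Y Lw_j)(t) dt for all f ∈ S. Then for every r with σ_r > 0, Σ_{j=1}^m ‖w_j − L^{-1}Π_r^Y Lw_j‖²_{L²(𝒪;X)} = Σ_{r < k ≤ s_X} σ_k² ‖φ_k − L^{-1}Π_r^Y Lφ_k‖²_X. If s_X = ∞, this error tends to 0 as r → ∞ provided either (i) L^{-1} is bounded and sup_r ‖Π_r^Y‖ < ∞, or (ii) the operators L^{-1}Π_r^Y L are uniformly bounded in operator norm. -/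
open Filter MeasureTheory
open scoped ENNReal

noncomputable section
namespace Stmt10Aux

variable {𝕜 : Type*} [RCLike 𝕜]

local notation "⟪" x ", " y "⟫" => @inner 𝕜 _ _ x y

lemma ofReal_norm_eq_coe_nnnorm {E : Type*} [SeminormedAddCommGroup E] (a : E) :
    ENNReal.ofReal ‖a‖ = (‖a‖₊ : ℝ≥0∞) := ofReal_norm a

/-- An orthonormal family in a second countable space has countable index. -/
lemma countable_of_orthonormal {E : Type*} [NormedAddCommGroup E] [InnerProductSpace 𝕜 E]
    [SecondCountableTopology E] {w : Set E} (h : Orthonormal 𝕜 ((↑) : w → E)) :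
    Countable w := by
  refine Pairwise.countable_of_isOpen_disjoint
    (s := fun x : w => Metric.ball (x : E) (1/2)) ?_ (fun _ => Metric.isOpen_ball)
    (fun i => ⟨i, Metric.mem_ball_self (by norm_num)⟩)
  intro i j hij
  have hsq : ‖(i : E) - (j : E)‖ ^ 2 = 2 := by
    rw [@norm_sub_sq 𝕜]
    rw [h.2 hij]
    simp [h.1 i, h.1 j]
    norm_num
  have h1 : (1:ℝ) ≤ ‖(i : E) - (j : E)‖ := by nlinarith [norm_nonneg ((i:E) - (j:E))]
  simp only [Function.onFun]
  apply Metric.ball_disjoint_ball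
  rw [dist_eq_norm]
  linarith

/-- Parseval identity, `ℝ≥0∞`-version. -/
lemma parseval_nnnorm {E ι : Type*} [NormedAddCommGroup E] [InnerProductSpace 𝕜 E]
    [CompleteSpace E] (b : HilbertBasis ι 𝕜 E) (x : E) :
    ∑' i, ((‖(⟪b i, x⟫ : 𝕜)‖₊ : ℝ≥0∞)) ^ 2 = (‖x‖₊ : ℝ≥0∞) ^ 2 := by
  have h1 := (b.hasSum_inner_mul_inner x x).mapL (RCLike.reCLM (K := 𝕜))
  have h2 : (fun i => RCLike.reCLM (K := 𝕜) (⟪x, b i⟫ * ⟪b i, x⟫))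
      = fun i => ‖(⟪b i, x⟫ : 𝕜)‖ ^ 2 := by
    funext i
    rw [← inner_conj_symm x (b i), RCLike.conj_mul]
    simp only [RCLike.reCLM_apply, ← RCLike.ofReal_pow, RCLike.ofReal_re]
  have h3 : RCLike.reCLM (K := 𝕜) ⟪x, x⟫ = ‖x‖ ^ 2 := inner_self_eq_norm_sq x
  rw [h2, h3] at h1
  have h4 := ENNReal.ofReal_tsum_of_nonneg (fun i => sq_nonneg _) h1.summable
  rw [h1.tsum_eq] at h4
  calc ∑' i, ((‖(⟪b i, x⟫ : 𝕜)‖₊ : ℝ≥0∞)) ^ 2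
      = ∑' i, ENNReal.ofReal (‖(⟪b i, x⟫ : 𝕜)‖ ^ 2) := by
        refine tsum_congr fun i => ?_
        rw [ENNReal.ofReal_pow (norm_nonneg _), ofReal_norm_eq_coe_nnnorm]
    _ = ENNReal.ofReal (‖x‖ ^ 2) := h4.symm
    _ = (‖x‖₊ : ℝ≥0∞) ^ 2 := by
        rw [ENNReal.ofReal_pow (norm_nonneg _), ofReal_norm_eq_coe_nnnorm]

/-- The squared `L²` norm as a lintegral. -/
lemma lintegral_nnnorm_sq {α Z : Type*} [MeasurableSpace α] {μ : Measure α}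
    [NormedAddCommGroup Z] (v : Lp Z 2 μ) :
    ∫⁻ t, (‖v t‖₊ : ℝ≥0∞) ^ 2 ∂μ = (‖v‖₊ : ℝ≥0∞) ^ 2 := by
  have hcoe : (‖v‖₊ : ℝ≥0∞) = eLpNorm (v : α → Z) 2 μ := by
    rw [Lp.nnnorm_def, ENNReal.coe_toNNReal (Lp.eLpNorm_ne_top v)]
  rw [hcoe, eLpNorm_eq_lintegral_rpow_enorm_toReal (by norm_num) (by norm_num),
    show ((2:ℝ≥0∞).toReal) = (2:ℝ) by norm_num]
  rw [← ENNReal.rpow_natCast _ 2, ← ENNReal.rpow_mul,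
    show (1/(2:ℝ)) * ((2:ℕ):ℝ) = 1 by norm_num, ENNReal.rpow_one]
  refine lintegral_congr fun t => ?_
  rw [← ENNReal.rpow_natCast]
  norm_num
  rfl


lemma coeFn_sum {α E : Type*} [MeasurableSpace α] {μ : Measure α} [NormedAddCommGroup E]
    {p : ℝ≥0∞} {ι : Type*} (s : Finset ι) (F : ι → Lp E p μ) :
    ∀ᵐ t ∂μ, (∑ i ∈ s, F i) t = ∑ i ∈ s, F i t := by
  classical
  induction s using Finset.induction with
  | empty => simpa [Filter.EventuallyEq] using Lp.coeFn_zero E p μ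
  | @insert a s hns ih =>
    filter_upwards [Lp.coeFn_add (F a) (∑ i ∈ s, F i), ih] with t h1 h2
    rw [Finset.sum_insert hns, Finset.sum_insert hns, h1, Pi.add_apply, h2]

lemma norm_coord_le {m : ℕ} (x : EuclideanSpace 𝕜 (Fin m)) (j : Fin m) : ‖x j‖ ≤ ‖x‖ := by
  rw [EuclideanSpace.norm_eq]
  calc ‖x j‖ = Real.sqrt (‖x j‖ ^ 2) := (Real.sqrt_sq (norm_nonneg _)).symm
    _ ≤ _ := Real.sqrt_le_sqrt (Finset.single_le_sum
        (f := fun i => ‖x i‖ ^ 2) (fun i _ => sq_nonneg _) (Finset.mem_univ j))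

lemma integrable_smul_coord {α : Type*} [MeasurableSpace α] {μ : Measure α}
    {Z : Type*} [NormedAddCommGroup Z] [NormedSpace 𝕜 Z] {m : ℕ}
    (g : Lp (EuclideanSpace 𝕜 (Fin m)) 2 μ) (v : Lp Z 2 μ) (j : Fin m) :
    Integrable (fun t => (g t j) • (v t)) μ := by
  have hmeas : AEStronglyMeasurable (fun t => g t j) μ :=
    (EuclideanSpace.proj j : EuclideanSpace 𝕜 (Fin m) →L[𝕜]
      𝕜).continuous.comp_aestronglyMeasurable (Lp.aestronglyMeasurable g)
  have hg : MemLp (fun t => g t j) 2 μ := by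
    refine (Lp.memLp g).of_le hmeas ?_
    filter_upwards with t using norm_coord_le (g t) j
  have hs : MemLp ((fun t => g t j) • fun t => v t) 1 μ := by
    exact (Lp.memLp v).smul hg
  exact memLp_one_iff_integrable.mp hs


/-- Coordinate inclusion `𝕜 → EuclideanSpace 𝕜 (Fin m)` as a continuous linear map. -/
def singleCLM (m : ℕ) (j : Fin m) : 𝕜 →L[𝕜] EuclideanSpace 𝕜 (Fin m) :=
  LinearMap.mkContinuous
    ((WithLp.linearEquiv 2 𝕜 (Fin m → 𝕜)).symm.toLinearMap.comp
      (LinearMap.single 𝕜 (fun _ : Fin m => 𝕜) j)) 1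
    (fun a => by
      have : ((WithLp.linearEquiv 2 𝕜 (Fin m → 𝕜)).symm.toLinearMap.comp
          (LinearMap.single 𝕜 (fun _ : Fin m => 𝕜) j)) a = EuclideanSpace.single j a := rfl
      rw [this, EuclideanSpace.norm_single, one_mul])

@[simp] lemma singleCLM_apply (m : ℕ) (j : Fin m) (a : 𝕜) :
    singleCLM m j a = EuclideanSpace.single j a := rfl

/-- `z ↦ EuclideanSpace.single j ⟪z, e⟫`, as a real-linear continuous map. -/
def rowCLM {Z : Type*} [NormedAddCommGroup Z] [InnerProductSpace 𝕜 Z]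
    [NormedSpace ℝ Z] [IsScalarTower ℝ 𝕜 Z] (e : Z) (m : ℕ) (j : Fin m) :
    Z →L[ℝ] EuclideanSpace 𝕜 (Fin m) :=
  ((singleCLM m j).restrictScalars ℝ).comp
    ((RCLike.conjLIE (K := 𝕜)).toLinearIsometry.toContinuousLinearMap.comp
      ((innerSL 𝕜 e).restrictScalars ℝ))

@[simp] lemma rowCLM_apply {Z : Type*} [NormedAddCommGroup Z] [InnerProductSpace 𝕜 Z]
    [NormedSpace ℝ Z] [IsScalarTower ℝ 𝕜 Z] (e : Z) (m : ℕ) (j : Fin m) (z : Z) :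
    rowCLM e m j z = EuclideanSpace.single j (⟪z, e⟫ : 𝕜) := by
  have : rowCLM e m j z = EuclideanSpace.single j
      ((starRingEnd 𝕜) (⟪e, z⟫ : 𝕜)) := rfl
  rw [this, inner_conj_symm]

lemma normsq_sum_single {m : ℕ} (c : Fin m → 𝕜) :
    (‖∑ j, EuclideanSpace.single j (c j)‖₊ : ℝ≥0∞) ^ 2 = ∑ j, (‖c j‖₊ : ℝ≥0∞) ^ 2 := by
  classical
  have h1 : (⟪∑ j, EuclideanSpace.single j (c j), ∑ j, EuclideanSpace.single j (c j)⟫ : 𝕜)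
      = ∑ j, ((‖c j‖ : 𝕜)) ^ 2 := by
    rw [inner_sum]
    refine Finset.sum_congr rfl fun j' _ => ?_
    rw [sum_inner, Finset.sum_eq_single j']
    · rw [EuclideanSpace.inner_single_left, EuclideanSpace.single_apply, if_pos rfl,
        RCLike.conj_mul]
    · intro j _ hj
      rw [EuclideanSpace.inner_single_left, EuclideanSpace.single_apply, if_neg hj, mul_zero]
    · intro hj; exact absurd (Finset.mem_univ j') hj
  have hr : ‖∑ j, EuclideanSpace.single j (c j)‖ ^ 2 = ∑ j, ‖c j‖ ^ 2 := by
    rw [← inner_self_eq_norm_sq (𝕜 := 𝕜), h1, map_sum]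
    refine Finset.sum_congr rfl fun j _ => ?_
    rw [← RCLike.ofReal_pow, RCLike.ofReal_re]
  calc (‖∑ j, EuclideanSpace.single j (c j)‖₊ : ℝ≥0∞) ^ 2
      = ENNReal.ofReal (‖∑ j, EuclideanSpace.single j (c j)‖ ^ 2) := by
        rw [ENNReal.ofReal_pow (norm_nonneg _), ofReal_norm_eq_coe_nnnorm]
    _ = ENNReal.ofReal (∑ j, ‖c j‖ ^ 2) := by rw [hr]
    _ = ∑ j, (‖c j‖₊ : ℝ≥0∞) ^ 2 := by
        rw [ENNReal.ofReal_sum_of_nonneg (fun j _ => sq_nonneg _)]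
        exact Finset.sum_congr rfl fun j _ => by
          rw [ENNReal.ofReal_pow (norm_nonneg _), ofReal_norm_eq_coe_nnnorm]

lemma tsum_shift_of_zero {A : ℕ → ℝ≥0∞} (r : ℕ) (h : ∀ k < r, A k = 0) :
    ∑' k, A k = ∑' k, A (r + k) := by
  have h0 := (ENNReal.summable (f := fun i => A (i + r))).sum_add_tsum_nat_add'
  rw [Finset.sum_eq_zero (fun k hk => h k (Finset.mem_range.mp hk)), zero_add] at h0
  rw [← h0]
  exact tsum_congr fun k => by rw [add_comm k r]

/-- The Hilbert–Schmidt identity for vector-valued `L²` integral operators. -/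
lemma hs_identity {Z : Type*} [NormedAddCommGroup Z] [InnerProductSpace 𝕜 Z]
    [NormedSpace ℝ Z] [IsScalarTower ℝ 𝕜 Z] [CompleteSpace Z] [SecondCountableTopology Z]
    {α : Type*} [MeasurableSpace α] {μ : Measure α} {m : ℕ}
    (u : Fin m → Lp Z 2 μ)
    (f : HilbertBasis ℕ 𝕜 (Lp (EuclideanSpace 𝕜 (Fin m)) 2 μ))
    (Q : Lp (EuclideanSpace 𝕜 (Fin m)) 2 μ → Z)
    (hQ : ∀ g : Lp (EuclideanSpace 𝕜 (Fin m)) 2 μ, Q g = ∑ j, ∫ t, (g t j) • (u j t) ∂μ) :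
    ∑' k, (‖Q (f k)‖₊ : ℝ≥0∞) ^ 2 = ∑ j, ∫⁻ t, (‖u j t‖₊ : ℝ≥0∞) ^ 2 ∂μ := by
  classical
  obtain ⟨W, e, he⟩ := exists_hilbertBasis 𝕜 Z
  haveI : Countable W := countable_of_orthonormal (𝕜 := 𝕜) (he ▸ e.orthonormal)
  set h : W → Lp (EuclideanSpace 𝕜 (Fin m)) 2 μ :=
    fun i => ∑ j, (rowCLM (𝕜 := 𝕜) (e i) m j).compLp (u j) with hh
  have hht : ∀ i : W, ∀ᵐ t ∂μ,
      h i t = ∑ j, EuclideanSpace.single j (⟪u j t, e i⟫ : 𝕜) := by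
    intro i
    have h1 := coeFn_sum (μ := μ) Finset.univ
      (fun j => (rowCLM (𝕜 := 𝕜) (e i) m j).compLp (u j))
    have h2 : ∀ᵐ t ∂μ, ∀ j : Fin m,
        ((rowCLM (𝕜 := 𝕜) (e i) m j).compLp (u j)) t = rowCLM (e i) m j (u j t) :=
      ae_all_iff.mpr fun j => ContinuousLinearMap.coeFn_compLp _ _
    filter_upwards [h1, h2] with t ht1 ht2
    rw [hh]
    rw [ht1]
    exact Finset.sum_congr rfl fun j _ => by rw [ht2 j, rowCLM_apply]
  have hint : ∀ (g : Lp (EuclideanSpace 𝕜 (Fin m)) 2 μ) (j : Fin m),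
      Integrable (fun t => (g t j) • (u j t)) μ := fun g j => integrable_smul_coord g (u j) j
  have hip : ∀ (i : W) (g : Lp (EuclideanSpace 𝕜 (Fin m)) 2 μ),
      (⟪h i, g⟫ : 𝕜) = ⟪e i, Q g⟫ := by
    intro i g
    rw [MeasureTheory.L2.inner_def, hQ g, inner_sum]
    have h3 : ∀ j : Fin m, (⟪e i, ∫ t, (g t j) • (u j t) ∂μ⟫ : 𝕜)
        = ∫ t, (⟪e i, (g t j) • (u j t)⟫ : 𝕜) ∂μ :=
      fun j => (integral_inner (hint g j) (e i)).symm
    rw [Finset.sum_congr rfl fun j _ => h3 j]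
    have hInt : ∀ j ∈ Finset.univ, Integrable (fun t => (⟪e i, (g t j) • (u j t)⟫ : 𝕜)) μ := by
      intro j _
      have := (innerSL 𝕜 (e i)).integrable_comp (hint g j)
      exact this.congr (Eventually.of_forall fun t => rfl)
    refine Eq.trans (integral_congr_ae ?_) (integral_finset_sum _ hInt)
    filter_upwards [hht i] with t ht
    rw [ht, sum_inner]
    refine Finset.sum_congr rfl fun j _ => ?_
    rw [EuclideanSpace.inner_single_left, inner_conj_symm, inner_smul_right, mul_comm]
  have hmeas : ∀ (j : Fin m) (i : W),
      AEMeasurable (fun t => (‖(⟪u j t, e i⟫ : 𝕜)‖₊ : ℝ≥0∞) ^ 2) μ := by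
    intro j i
    have h1 : AEStronglyMeasurable (fun t => (⟪u j t, e i⟫ : 𝕜)) μ := by
      have h2 : Continuous fun z : Z => (⟪z, e i⟫ : 𝕜) := by
        have := (RCLike.continuous_conj (K := 𝕜)).comp (innerSL 𝕜 (e i)).continuous
        refine this.congr fun z => ?_
        exact inner_conj_symm _ _
      exact h2.comp_aestronglyMeasurable (Lp.aestronglyMeasurable (u j))
    exact h1.aemeasurable.enorm.pow_const 2
  calc ∑' k, (‖Q (f k)‖₊ : ℝ≥0∞) ^ 2
      = ∑' k, ∑' (i : W), (‖(⟪e i, Q (f k)⟫ : 𝕜)‖₊ : ℝ≥0∞) ^ 2 :=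
        tsum_congr fun k => (parseval_nnnorm e _).symm
    _ = ∑' (i : W), ∑' k, (‖(⟪e i, Q (f k)⟫ : 𝕜)‖₊ : ℝ≥0∞) ^ 2 := ENNReal.tsum_comm
    _ = ∑' (i : W), (‖h i‖₊ : ℝ≥0∞) ^ 2 := by
        refine tsum_congr fun i => ?_
        rw [← parseval_nnnorm f (h i)]
        refine tsum_congr fun k => ?_
        have : (⟪f k, h i⟫ : 𝕜) = (starRingEnd 𝕜) (⟪e i, Q (f k)⟫ : 𝕜) := by
          rw [← hip i (f k), inner_conj_symm]
        rw [this, RCLike.nnnorm_conj]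
    _ = ∑' (i : W), ∫⁻ t, ∑ j, (‖(⟪u j t, e i⟫ : 𝕜)‖₊ : ℝ≥0∞) ^ 2 ∂μ := by
        refine tsum_congr fun i => ?_
        rw [← lintegral_nnnorm_sq (h i)]
        refine lintegral_congr_ae ?_
        filter_upwards [hht i] with t ht
        rw [ht, normsq_sum_single]
    _ = ∑' (i : W), ∑ j, ∫⁻ t, (‖(⟪u j t, e i⟫ : 𝕜)‖₊ : ℝ≥0∞) ^ 2 ∂μ :=
        tsum_congr fun i => lintegral_finset_sum' _ (fun j _ => hmeas j i)
    _ = ∑ j, ∑' (i : W), ∫⁻ t, (‖(⟪u j t, e i⟫ : 𝕜)‖₊ : ℝ≥0∞) ^ 2 ∂μ :=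
        Summable.tsum_finsetSum (fun j _ => ENNReal.summable)
    _ = ∑ j, ∫⁻ t, ∑' (i : W), (‖(⟪u j t, e i⟫ : 𝕜)‖₊ : ℝ≥0∞) ^ 2 ∂μ :=
        Finset.sum_congr rfl fun j _ => (lintegral_tsum fun i => hmeas j i).symm
    _ = ∑ j, ∫⁻ t, (‖u j t‖₊ : ℝ≥0∞) ^ 2 ∂μ := by
        refine Finset.sum_congr rfl fun j _ => lintegral_congr fun t => ?_
        rw [← parseval_nnnorm e (u j t)]
        refine tsum_congr fun i => ?_
        rw [← inner_conj_symm (u j t) (e i), RCLike.nnnorm_conj]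

end Stmt10Aux

open Stmt10Aux in
set_option maxHeartbeats 4000000 in
/-- Continuous POD setting as in Statement 9, with `L`
injective on its domain `D = D(L)` (encoded by a linear left inverse `Linv`
of `L` on `D`, representing `L⁻¹ : range L → X`; `Π_r^Y` maps into
`Y_r = span{Lφ_k : k < r} ⊆ L(D)`, so `Linv (P r ·)` represents `L⁻¹Π_r^Y`),
and the `L⁻¹` assumption: either `s_X < ∞`, or
`L⁻¹Π_r^Y L K f = Σ_j ∫ f_j(t) (L⁻¹Π_r^Y L w_j)(t) dt` for all `f ∈ S`.
Conclusion: the exact error formula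
`Σ_j ‖w_j − L⁻¹Π_r^Y L w_j‖²_{L²(𝒪;X)} = Σ_{r<k≤s_X} σ_k² ‖φ_k − L⁻¹Π_r^Y Lφ_k‖²`,
and for `s_X = ∞` its convergence to `0` provided either (i) `L⁻¹` is bounded
and `sup_r ‖Π_r^Y‖ < ∞`, or (ii) the operators `L⁻¹Π_r^Y L` are uniformly
bounded. -/
theorem stmt10
    {𝕜 : Type*} [RCLike 𝕜]
    {X Y : Type*}
    [NormedAddCommGroup X] [InnerProductSpace 𝕜 X] [NormedSpace ℝ X] [IsScalarTower ℝ 𝕜 X]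
    [CompleteSpace X] [SecondCountableTopology X]
    [NormedAddCommGroup Y] [InnerProductSpace 𝕜 Y] [NormedSpace ℝ Y] [IsScalarTower ℝ 𝕜 Y]
    [CompleteSpace Y] [SecondCountableTopology Y]
    (d m : ℕ) (hm : 0 < m)
    (O : Set (Fin d → ℝ)) (hO : IsOpen O)
    (w : Fin m → Lp X 2 (volume.restrict O))
    (K : Lp (EuclideanSpace 𝕜 (Fin m)) 2 (volume.restrict O) →L[𝕜] X)
    (hK : ∀ f : Lp (EuclideanSpace 𝕜 (Fin m)) 2 (volume.restrict O),
      K f = ∑ j, ∫ t, (f t j) • (w j t) ∂(volume.restrict O))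
    (hKcpt : IsCompactOperator K)
    (σ : ℕ → ℝ) (hσmono : Antitone σ) (hσnn : ∀ k, 0 ≤ σ k)
    (f : HilbertBasis ℕ 𝕜 (Lp (EuclideanSpace 𝕜 (Fin m)) 2 (volume.restrict O)))
    (φ : ℕ → X)
    (hφON : ∀ j k, 0 < σ j → 0 < σ k →
      (inner 𝕜 (φ j) (φ k) : 𝕜) = if j = k then 1 else 0)
    (hSVD : ∀ g : Lp (EuclideanSpace 𝕜 (Fin m)) 2 (volume.restrict O),
      K g = ∑' k, ((σ k : 𝕜) * (inner 𝕜 (f k) g : 𝕜)) • φ k)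
    (hKf : ∀ k, 0 < σ k → K (f k) = (σ k : 𝕜) • φ k)
    (sX : ℕ∞) (hsX : ∀ k, 0 < σ k ↔ (k : ℕ∞) < sX)
    (D : Submodule 𝕜 X) (L : X →ₗ[𝕜] Y)
    (hwD : ∀ j, ∀ᵐ t ∂(volume.restrict O), w j t ∈ D)
    (hKD : ∀ g, K g ∈ D)
    (hφD : ∀ k, 0 < σ k → φ k ∈ D)
    (Lw : Fin m → Lp Y 2 (volume.restrict O))
    (hLw : ∀ j, ∀ᵐ t ∂(volume.restrict O), Lw j t = L (w j t))
    (hLK : ∀ g : Lp (EuclideanSpace 𝕜 (Fin m)) 2 (volume.restrict O),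
      L (K g) = ∑ j, ∫ t, (g t j) • (Lw j t) ∂(volume.restrict O))
    (Linv : Y →ₗ[𝕜] X) (hLinv : ∀ x ∈ D, Linv (L x) = x)
    (P : ℕ → Y →L[𝕜] Y)
    (hPfix : ∀ r, (∀ k < r, 0 < σ k) → ∀ k < r, P r (L (φ k)) = L (φ k))
    (hPrange : ∀ r, (∀ k < r, 0 < σ k) → ∀ y : Y,
      P r y ∈ Submodule.span 𝕜 ((fun k => L (φ k)) '' Set.Iio r))
    (hLinvAssumption : sX ≠ ⊤ ∨
      ∀ r, (∀ k < r, 0 < σ k) →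
        ∀ g : Lp (EuclideanSpace 𝕜 (Fin m)) 2 (volume.restrict O),
          Linv (P r (L (K g)))
            = ∑ j, ∫ t, (g t j) • Linv (P r (Lw j t)) ∂(volume.restrict O)) :
    (∀ r, (∀ k < r, 0 < σ k) →
      ∑ j, ∫ t, ‖w j t - Linv (P r (Lw j t))‖ ^ 2 ∂(volume.restrict O)
        = ∑' k, σ (r + k) ^ 2 * ‖φ (r + k) - Linv (P r (L (φ (r + k))))‖ ^ 2)
    ∧ (sX = ⊤ →
        ((∃ C, ∀ x ∈ D, ‖x‖ ≤ C * ‖L x‖) ∧ (∃ C, ∀ r, ‖P r‖ ≤ C)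
          ∨ (∃ C, ∀ r, ∀ x ∈ D, ‖Linv (P r (L x))‖ ≤ C * ‖x‖)) →
        Tendsto (fun r => ∑ j, ∫ t, ‖w j t - Linv (P r (Lw j t))‖ ^ 2
          ∂(volume.restrict O)) atTop (nhds 0)) := by
  classical
  have hKfk : ∀ k, K (f k) = ((σ k : 𝕜)) • φ k := by
    intro k
    rw [hSVD (f k)]
    have hz : ∀ l, l ≠ k → ((σ l : 𝕜) * (inner 𝕜 (f l) (f k) : 𝕜)) • φ l = 0 := by
      intro l hl
      rw [orthonormal_iff_ite.mp f.orthonormal, if_neg hl, mul_zero, zero_smul]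
    rw [tsum_eq_single k hz, orthonormal_iff_ite.mp f.orthonormal, if_pos rfl, mul_one]
  -- truncated reconstruction operators
  have hTex : ∀ r, ∃ T : Y →L[𝕜] X, (∀ k < r, 0 < σ k) → ∀ y, T y = Linv (P r y) := by
    intro r
    by_cases hr : ∀ k < r, 0 < σ k
    · haveI : FiniteDimensional 𝕜 (Submodule.span 𝕜 ((fun k => L (φ k)) '' Set.Iio r)) :=
        FiniteDimensional.span_of_finite 𝕜 ((Set.finite_Iio r).image _)
      refine ⟨(LinearMap.toContinuousLinearMap
          (Linv.comp (Submodule.subtype _))).comp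
          ((P r).codRestrict _ (hPrange r hr)), fun _ y => ?_⟩
      simp [ContinuousLinearMap.codRestrict]
      rfl
    · exact ⟨0, fun h => absurd h hr⟩
  choose T hT using hTex
  -- main identity
  have main : ∀ r, (∀ k < r, 0 < σ k) →
      (∑ j, ∫ t, ‖w j t - Linv (P r (Lw j t))‖ ^ 2 ∂(volume.restrict O))
        = (∑' k, (‖K (f k) - T r (L (K (f k)))‖₊ : ℝ≥0∞) ^ 2).toReal := by
    intro r hr
    set u : Fin m → Lp X 2 (volume.restrict O) := fun j => w j - (T r).compLp (Lw j) with hu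
    have hucoe : ∀ j, ∀ᵐ t ∂(volume.restrict O), u j t = w j t - T r (Lw j t) := by
      intro j
      filter_upwards [Lp.coeFn_sub (w j) ((T r).compLp (Lw j)),
        ContinuousLinearMap.coeFn_compLp (T r) (Lw j)] with t h1 h2
      rw [hu]
      simp only [Pi.sub_apply] at h1
      rw [h1, h2]
    have hQ : ∀ g : Lp (EuclideanSpace 𝕜 (Fin m)) 2 (volume.restrict O),
        K g - T r (L (K g)) = ∑ j, ∫ t, (g t j) • (u j t) ∂(volume.restrict O) := by
      intro g
      have h1 : T r (L (K g)) = ∑ j, ∫ t, (g t j) • (T r (Lw j t)) ∂(volume.restrict O) := by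
        rw [hLK g, map_sum]
        refine Finset.sum_congr rfl fun j _ => ?_
        rw [← ContinuousLinearMap.integral_comp_comm (T r)
          (integrable_smul_coord g (Lw j) j)]
        exact integral_congr_ae (Filter.Eventually.of_forall fun t => by simp only [_root_.map_smul])
      have hint1 : ∀ j : Fin m, Integrable (fun t => (g t j) • (w j t)) (volume.restrict O) :=
        fun j => integrable_smul_coord g (w j) j
      have hint2 : ∀ j : Fin m, Integrable (fun t => (g t j) • (T r (Lw j t))) (volume.restrict O) := by
        intro j
        have h2 := (T r).integrable_comp (integrable_smul_coord g (Lw j) j)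
        exact h2.congr (Filter.Eventually.of_forall fun t => by simp only [_root_.map_smul])
      rw [h1, hK g, ← Finset.sum_sub_distrib]
      refine Finset.sum_congr rfl fun j _ => ?_
      rw [← integral_sub (hint1 j) (hint2 j)]
      refine integral_congr_ae ?_
      filter_upwards [hucoe j] with t h2
      rw [← smul_sub, h2]
    have hid := hs_identity u f (fun g => K g - T r (L (K g))) hQ
    have hLHS : ∀ j : Fin m, ∫ t, ‖w j t - Linv (P r (Lw j t))‖ ^ 2 ∂(volume.restrict O)
        = (∫⁻ t, (‖u j t‖₊ : ℝ≥0∞) ^ 2 ∂(volume.restrict O)).toReal := by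
      intro j
      have hmeas : AEStronglyMeasurable (fun t => ‖u j t‖ ^ 2) (volume.restrict O) := by
        have h1 := (Lp.aestronglyMeasurable (u j)).norm
        exact h1.pow 2
      rw [integral_congr_ae (g := fun t => ‖u j t‖ ^ 2) ?_,
        integral_eq_lintegral_of_nonneg_ae (Filter.Eventually.of_forall fun t => sq_nonneg _)
          hmeas]
      · congr 1
        refine lintegral_congr fun t => ?_
        rw [ENNReal.ofReal_pow (norm_nonneg _), ofReal_norm_eq_coe_nnnorm]
      · filter_upwards [hucoe j] with t h1
        rw [h1, hT r hr]
    rw [Finset.sum_congr rfl fun j _ => hLHS j, ← ENNReal.toReal_sum ?_, ← hid]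
    intro j _
    rw [lintegral_nnnorm_sq]
    exact ENNReal.pow_ne_top ENNReal.coe_ne_top
  -- vanishing of the first r terms, and shifting
  have hvanish : ∀ r, (∀ k < r, 0 < σ k) → ∀ k < r,
      (‖K (f k) - T r (L (K (f k)))‖₊ : ℝ≥0∞) ^ 2 = 0 := by
    intro r hr k hk
    have h1 : T r (L (φ k)) = φ k := by
      rw [hT r hr, hPfix r hr k hk, hLinv _ (hφD k (hr k hk))]
    have h2 : K (f k) - T r (L (K (f k))) = 0 := by
      rw [hKfk k, _root_.map_smul, _root_.map_smul, h1, sub_self]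
    rw [h2]
    simp
  have hshift : ∀ r, (∀ k < r, 0 < σ k) →
      (∑' k, (‖K (f k) - T r (L (K (f k)))‖₊ : ℝ≥0∞) ^ 2)
        = ∑' k, (‖K (f (r + k)) - T r (L (K (f (r + k))))‖₊ : ℝ≥0∞) ^ 2 := by
    intro r hr
    exact tsum_shift_of_zero r (hvanish r hr)
  have hterm : ∀ r, (∀ k < r, 0 < σ k) → ∀ k,
      ((‖K (f k) - T r (L (K (f k)))‖₊ : ℝ≥0∞) ^ 2).toReal
        = σ k ^ 2 * ‖φ k - Linv (P r (L (φ k)))‖ ^ 2 := by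
    intro r hr k
    have h1 : K (f k) - T r (L (K (f k))) = (σ k : 𝕜) • (φ k - Linv (P r (L (φ k)))) := by
      rw [hKfk k, _root_.map_smul, _root_.map_smul, ← smul_sub, hT r hr]
    rw [h1, ENNReal.toReal_pow, ENNReal.coe_toReal, coe_nnnorm, norm_smul,
      RCLike.norm_ofReal, abs_of_nonneg (hσnn k), mul_pow]
  refine ⟨fun r hr => ?_, fun hsX_top hbnd => ?_⟩
  · rw [main r hr, hshift r hr,
      ENNReal.tsum_toReal_eq (fun k => ENNReal.pow_ne_top ENNReal.coe_ne_top)]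
    exact tsum_congr fun k => hterm r hr (r + k)
  -- part 2 : convergence
  · have hσpos : ∀ k, 0 < σ k := by
      intro k
      refine (hsX k).mpr ?_
      rw [hsX_top]
      exact lt_of_le_of_ne le_top (by simp)
    have hrall : ∀ r, ∀ k < r, 0 < σ k := fun r k _ => hσpos k
    obtain ⟨M, hM0, hM⟩ : ∃ M, 0 ≤ M ∧ ∀ r k,
        ‖K (f k) - T r (L (K (f k)))‖ ≤ M * (‖K (f k)‖ + ‖L (K (f k))‖) := by
      rcases hbnd with ⟨⟨C₁, hC₁⟩, ⟨C₂, hC₂⟩⟩ | ⟨C, hC⟩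
      · have hLinvD : ∀ r (y : Y), Linv (P r y) ∈ D ∧ L (Linv (P r y)) = P r y := by
          intro r y
          have hz := hPrange r (hrall r) y
          rw [show ((fun k => L (φ k)) '' Set.Iio r) = L '' (φ '' Set.Iio r) by
            rw [Set.image_image], Submodule.span_image] at hz
          obtain ⟨x, hx, hLx⟩ := hz
          have hxD : x ∈ D := by
            have hle : Submodule.span 𝕜 (φ '' Set.Iio r) ≤ D := by
              refine Submodule.span_le.mpr ?_
              rintro _ ⟨k, _, rfl⟩
              exact hφD k (hσpos k)
            exact hle hx
          rw [← hLx, hLinv x hxD]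
          exact ⟨hxD, rfl⟩
        have hTb : ∀ r (y : Y), ‖T r y‖ ≤ max C₁ 0 * max C₂ 0 * ‖y‖ := by
          intro r y
          rw [hT r (hrall r)]
          obtain ⟨hD1, hD2⟩ := hLinvD r y
          calc ‖Linv (P r y)‖ ≤ C₁ * ‖L (Linv (P r y))‖ := hC₁ _ hD1
            _ ≤ max C₁ 0 * ‖P r y‖ := by
                rw [hD2]
                exact mul_le_mul_of_nonneg_right (le_max_left _ _) (norm_nonneg _)
            _ ≤ max C₁ 0 * (max C₂ 0 * ‖y‖) := by
                refine mul_le_mul_of_nonneg_left ?_ (le_max_right C₁ 0)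
                calc ‖P r y‖ ≤ ‖P r‖ * ‖y‖ := (P r).le_opNorm y
                  _ ≤ max C₂ 0 * ‖y‖ := mul_le_mul_of_nonneg_right
                      ((hC₂ r).trans (le_max_left _ _)) (norm_nonneg _)
            _ = max C₁ 0 * max C₂ 0 * ‖y‖ := (mul_assoc _ _ _).symm
        refine ⟨max 1 (max C₁ 0 * max C₂ 0), le_trans zero_le_one (le_max_left _ _),
          fun r k => ?_⟩
        calc ‖K (f k) - T r (L (K (f k)))‖
            ≤ ‖K (f k)‖ + ‖T r (L (K (f k)))‖ := norm_sub_le _ _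
          _ ≤ ‖K (f k)‖ + max C₁ 0 * max C₂ 0 * ‖L (K (f k))‖ :=
              add_le_add_right (hTb r _) _
          _ ≤ max 1 (max C₁ 0 * max C₂ 0) * (‖K (f k)‖ + ‖L (K (f k))‖) := by
              rw [mul_add]
              refine add_le_add ?_ ?_
              · nth_rewrite 1 [← one_mul ‖K (f k)‖]
                exact mul_le_mul_of_nonneg_right (le_max_left _ _) (norm_nonneg _)
              · exact mul_le_mul_of_nonneg_right (le_max_right _ _) (norm_nonneg _)
      · refine ⟨1 + max C 0, by positivity, fun r k => ?_⟩
        calc ‖K (f k) - T r (L (K (f k)))‖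
            ≤ ‖K (f k)‖ + ‖T r (L (K (f k)))‖ := norm_sub_le _ _
          _ ≤ ‖K (f k)‖ + max C 0 * ‖K (f k)‖ := by
              refine add_le_add_right ?_ _
              rw [hT r (hrall r)]
              calc ‖Linv (P r (L (K (f k))))‖ ≤ C * ‖K (f k)‖ := hC r _ (hKD (f k))
                _ ≤ max C 0 * ‖K (f k)‖ :=
                    mul_le_mul_of_nonneg_right (le_max_left _ _) (norm_nonneg _)
          _ = (1 + max C 0) * ‖K (f k)‖ := by ring
          _ ≤ (1 + max C 0) * (‖K (f k)‖ + ‖L (K (f k))‖) := by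
              refine mul_le_mul_of_nonneg_left ?_ (by positivity)
              exact le_add_of_nonneg_right (norm_nonneg _)
    set B : ℕ → ℝ≥0∞ := fun k =>
      ENNReal.ofReal ((M * (‖K (f k)‖ + ‖L (K (f k))‖)) ^ 2) with hBdef
    have hAB : ∀ r k, (‖K (f k) - T r (L (K (f k)))‖₊ : ℝ≥0∞) ^ 2 ≤ B k := by
      intro r k
      rw [hBdef, ← ofReal_norm_eq_coe_nnnorm, ← ENNReal.ofReal_pow (norm_nonneg _)]
      exact ENNReal.ofReal_le_ofReal (pow_le_pow_left₀ (norm_nonneg _) (hM r k) 2)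
    have hBsum : ∑' k, B k ≠ ⊤ := by
      have h1 : ∀ k, B k ≤ ENNReal.ofReal (2 * M ^ 2) *
          ((‖K (f k)‖₊ : ℝ≥0∞) ^ 2 + (‖L (K (f k))‖₊ : ℝ≥0∞) ^ 2) := by
        intro k
        have hr2 : (M * (‖K (f k)‖ + ‖L (K (f k))‖)) ^ 2
            ≤ 2 * M ^ 2 * (‖K (f k)‖ ^ 2 + ‖L (K (f k))‖ ^ 2) := by
          nlinarith [sq_nonneg (‖K (f k)‖ - ‖L (K (f k))‖), sq_nonneg M]
        calc B k ≤ ENNReal.ofReal (2 * M ^ 2 * (‖K (f k)‖ ^ 2 + ‖L (K (f k))‖ ^ 2)) :=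
              ENNReal.ofReal_le_ofReal hr2
          _ = _ := by
              rw [ENNReal.ofReal_mul (by positivity),
                ENNReal.ofReal_add (sq_nonneg _) (sq_nonneg _),
                ENNReal.ofReal_pow (norm_nonneg _), ENNReal.ofReal_pow (norm_nonneg _),
                ofReal_norm_eq_coe_nnnorm, ofReal_norm_eq_coe_nnnorm]
      have hw2 : ∑' k, (‖K (f k)‖₊ : ℝ≥0∞) ^ 2 ≠ ⊤ := by
        rw [hs_identity w f (fun g => K g) hK]
        refine (ENNReal.sum_lt_top.mpr fun j _ => ?_).ne
        rw [lintegral_nnnorm_sq]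
        exact ENNReal.pow_lt_top (ENNReal.coe_lt_top)
      have hL2 : ∑' k, (‖L (K (f k))‖₊ : ℝ≥0∞) ^ 2 ≠ ⊤ := by
        rw [hs_identity Lw f (fun g => L (K g)) hLK]
        refine (ENNReal.sum_lt_top.mpr fun j _ => ?_).ne
        rw [lintegral_nnnorm_sq]
        exact ENNReal.pow_lt_top (ENNReal.coe_lt_top)
      refine ne_top_of_le_ne_top ?_ (ENNReal.tsum_le_tsum h1)
      rw [ENNReal.tsum_mul_left, ENNReal.tsum_add]
      exact ENNReal.mul_ne_top ENNReal.ofReal_ne_top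
        (ENNReal.add_ne_top.mpr ⟨hw2, hL2⟩)
    have hGle : ∀ r, (∑' k, (‖K (f (r + k)) - T r (L (K (f (r + k))))‖₊ : ℝ≥0∞) ^ 2)
        ≤ ∑' k, B (k + r) := by
      intro r
      refine ENNReal.tsum_le_tsum fun k => ?_
      simpa [add_comm] using hAB r (r + k)
    have htail := ENNReal.tendsto_sum_nat_add B hBsum
    have hG0 : Tendsto (fun r => ∑' k,
        (‖K (f (r + k)) - T r (L (K (f (r + k))))‖₊ : ℝ≥0∞) ^ 2) atTop (nhds 0) :=
      tendsto_of_tendsto_of_tendsto_of_le_of_le tendsto_const_nhds htail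
        (fun r => zero_le) hGle
    have hfinal := (ENNReal.tendsto_toReal (a := 0) (by simp)).comp hG0
    simp only [Function.comp_def, ENNReal.toReal_zero] at hfinal
    refine Tendsto.congr (fun r => ?_) hfinal
    exact ((main r (hrall r)).trans (by rw [hshift r (hrall r)])).symm
end
end

section
/- Let r be a positive integer. For every choice of coefficients a_1,…,a_r ∈ 𝕂, vectors s_1,…,s_r ∈ S, and elements η_1,…,η_r ∈ X, the rank-at-most-r approximation z_j = Σ_{k=1}^r a_k (s_k)_j η_k (j = 1,…,s) satisfies Σ_{j=1}^s γ_j ‖w_j − z_j‖²_X ≥ Σ_{k > r} σ_k². Moreover, equality is attained by the POD approximation w_j^r = Σ_{k=1}^r (w_j, φ_k)_X φ_k = Σ_{k=1}^r σ_k conj(f_{k,j}) φ_k, i.e. Σ_{j=1}^s γ_j ‖w_j − w_j^r‖²_X = Σ_{k > r} σ_k². -/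
open Finset in
lemma podKey {𝕜 X : Type*} [RCLike 𝕜] [NormedAddCommGroup X] [InnerProductSpace 𝕜 X]
    {s : ℕ} (γ : Fin s → ℝ) (F : Fin s → Fin s → 𝕜)
    (H : ∀ k l : Fin s, ∑ j, (γ j : 𝕜) * (starRingEnd 𝕜) (F k j) * (F l j)
      = if k = l then (1:𝕜) else 0)
    (c : Fin s → 𝕜) (x : Fin s → X) :
    ∑ j, γ j * ‖∑ k, (c k * (starRingEnd 𝕜) (F k j)) • x k‖ ^ 2
      = ∑ k, ‖c k‖ ^ 2 * ‖x k‖ ^ 2 := by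
  have key : ∀ k l : Fin s, ∑ j, (γ j : 𝕜) * (F k j) * (starRingEnd 𝕜) (F l j)
      = if k = l then (1:𝕜) else 0 := by
    intro k l
    have h := congrArg (starRingEnd 𝕜) (H k l)
    rw [map_sum] at h
    have : ∀ j : Fin s, (starRingEnd 𝕜) ((γ j : 𝕜) * (starRingEnd 𝕜) (F k j) * (F l j))
        = (γ j : 𝕜) * (F k j) * (starRingEnd 𝕜) (F l j) := by
      intro j; simp [map_mul, RCLike.conj_ofReal]
    rw [Finset.sum_congr rfl (fun j _ => this j)] at h
    rw [h]
    split <;> simp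
  have main : ((∑ j, γ j * ‖∑ k, (c k * (starRingEnd 𝕜) (F k j)) • x k‖ ^ 2 : ℝ) : 𝕜)
      = ((∑ k, ‖c k‖ ^ 2 * ‖x k‖ ^ 2 : ℝ) : 𝕜) := by
    calc ((∑ j, γ j * ‖∑ k, (c k * (starRingEnd 𝕜) (F k j)) • x k‖ ^ 2 : ℝ) : 𝕜)
        = ∑ j, (γ j : 𝕜) * (inner 𝕜 (∑ k, (c k * (starRingEnd 𝕜) (F k j)) • x k)
            (∑ k, (c k * (starRingEnd 𝕜) (F k j)) • x k) : 𝕜) := by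
          push_cast
          refine Finset.sum_congr rfl fun j _ => ?_
          rw [inner_self_eq_norm_sq_to_K]
      _ = ∑ j, ∑ k, ∑ l, ((γ j : 𝕜) * (F k j) * (starRingEnd 𝕜) (F l j))
            * ((starRingEnd 𝕜) (c k) * c l * (inner 𝕜 (x k) (x l) : 𝕜)) := by
          refine Finset.sum_congr rfl fun j _ => ?_
          rw [sum_inner, Finset.mul_sum]
          refine Finset.sum_congr rfl fun k _ => ?_
          rw [inner_sum, Finset.mul_sum]
          refine Finset.sum_congr rfl fun l _ => ?_
          rw [inner_smul_left, inner_smul_right]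
          simp only [map_mul, RingHom.id_apply, starRingEnd_self_apply]
          ring
      _ = ∑ k, ∑ l, (∑ j, (γ j : 𝕜) * (F k j) * (starRingEnd 𝕜) (F l j))
            * ((starRingEnd 𝕜) (c k) * c l * (inner 𝕜 (x k) (x l) : 𝕜)) := by
          rw [Finset.sum_comm]
          refine Finset.sum_congr rfl fun k _ => ?_
          rw [Finset.sum_comm]
          refine Finset.sum_congr rfl fun l _ => ?_
          rw [Finset.sum_mul]
      _ = ∑ k, (starRingEnd 𝕜) (c k) * c k * (inner 𝕜 (x k) (x k) : 𝕜) := by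
          refine Finset.sum_congr rfl fun k _ => ?_
          rw [Finset.sum_congr rfl (fun l _ => by rw [key k l])]
          simp [Finset.sum_ite_eq]
      _ = ((∑ k, ‖c k‖ ^ 2 * ‖x k‖ ^ 2 : ℝ) : 𝕜) := by
          push_cast
          refine Finset.sum_congr rfl fun k _ => ?_
          rw [inner_self_eq_norm_sq_to_K, RCLike.conj_mul]
  exact_mod_cast main

open Finset in
lemma podNormSum {𝕜 X : Type*} [RCLike 𝕜] [NormedAddCommGroup X] [InnerProductSpace 𝕜 X]
    {ι : Type*} [Fintype ι] {v : ι → X} (hv : Orthonormal 𝕜 v) (c : ι → 𝕜) :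
    ‖∑ i, c i • v i‖ ^ 2 = ∑ i, ‖c i‖ ^ 2 := by
  have h := hv.inner_sum c c Finset.univ
  rw [inner_self_eq_norm_sq_to_K] at h
  have h2 : (((‖∑ i, c i • v i‖ : ℝ) ^ 2 : ℝ) : 𝕜) = ((∑ i, ‖c i‖ ^ 2 : ℝ) : 𝕜) := by
    push_cast
    rw [h]
    refine Finset.sum_congr rfl fun i _ => ?_
    rw [RCLike.conj_mul]
  exact_mod_cast h2

/-- Discrete POD optimality (0-based indexing; `Σ_{k>r}` is
the sum over `k : Fin s` with `r ≤ k`, trailing zero terms vanishing; `f_{k,j}`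
is the `j`-th component `b.repr (f k) j` of `f_k ∈ 𝕜^s`).  Every rank-at-most-`r`
approximation `z_j = Σ_{k<r} a_k (s_k)_j η_k` satisfies
`Σ_j γ_j ‖w_j − z_j‖² ≥ Σ_{k>r} σ_k²`, and equality is attained by the POD
approximation `w_j^r = Σ_{k<r} σ_k conj(f_{k,j}) φ_k (= Σ_{k<r} (w_j,φ_k) φ_k)`. -/
theorem stmt19
    {𝕜 : Type*} [RCLike 𝕜]
    {X S : Type*}
    [NormedAddCommGroup X] [InnerProductSpace 𝕜 X] [CompleteSpace X] [SecondCountableTopology X]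
    [NormedAddCommGroup S] [InnerProductSpace 𝕜 S] [CompleteSpace S]
    (s : ℕ) (hs : 0 < s)
    (b : Module.Basis (Fin s) 𝕜 S)
    (γ : Fin s → ℝ) (hγ : ∀ j, 0 < γ j)
    (hinner : ∀ u v : S, (inner 𝕜 u v : 𝕜) =
      ∑ j, (γ j : 𝕜) * (starRingEnd 𝕜) (b.repr u j) * (b.repr v j))
    (w : Fin s → X)
    (K : S →L[𝕜] X)
    (hK : ∀ g : S, K g = ∑ j, ((γ j : 𝕜) * (b.repr g j)) • w j)
    (σ : ℕ → ℝ) (hσmono : Antitone σ) (hσnn : ∀ k, 0 ≤ σ k)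
    (hσs : ∀ k, s ≤ k → σ k = 0)
    (f : OrthonormalBasis (Fin s) 𝕜 S)
    (φ : ℕ → X)
    (hφON : ∀ j k, 0 < σ j → 0 < σ k →
      (inner 𝕜 (φ j) (φ k) : 𝕜) = if j = k then 1 else 0)
    (hSVD : ∀ g : S, K g = ∑ k : Fin s, ((σ (k : ℕ) : 𝕜) * (inner 𝕜 (f k) g : 𝕜)) • φ (k : ℕ))
    (hKf : ∀ k : Fin s, 0 < σ (k : ℕ) → K (f k) = (σ (k : ℕ) : 𝕜) • φ (k : ℕ))
    (hKadj : ∀ k : Fin s, 0 < σ (k : ℕ) →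
      ContinuousLinearMap.adjoint K (φ (k : ℕ)) = (σ (k : ℕ) : 𝕜) • f k)
    (r : ℕ) (hr : 0 < r) :
    (∀ (a : Fin r → 𝕜) (sv : Fin r → S) (η : Fin r → X),
      (∑ k : Fin s, if r ≤ (k : ℕ) then σ (k : ℕ) ^ 2 else 0)
        ≤ ∑ j, γ j * ‖w j - ∑ k : Fin r, (a k * b.repr (sv k) j) • η k‖ ^ 2)
    ∧ (∑ j, γ j * ‖w j -
          ∑ k : Fin s, (if (k : ℕ) < r then
            ((σ (k : ℕ) : 𝕜) * (starRingEnd 𝕜) (b.repr (f k) j)) • φ (k : ℕ) else 0)‖ ^ 2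
        = ∑ k : Fin s, if r ≤ (k : ℕ) then σ (k : ℕ) ^ 2 else 0) := by
  classical
  set F : Fin s → Fin s → 𝕜 := fun k j => b.repr (f k) j with hF
  have H : ∀ k l : Fin s, ∑ j, (γ j : 𝕜) * (starRingEnd 𝕜) (F k j) * (F l j)
      = if k = l then (1:𝕜) else 0 := by
    intro k l
    rw [← hinner (f k) (f l)]
    exact orthonormal_iff_ite.mp f.orthonormal k l
  have hφnorm : ∀ k : ℕ, 0 < σ k → ‖φ k‖ ^ 2 = 1 := by
    intro k hk
    have h := hφON k k hk hk
    rw [if_pos rfl] at h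
    have h2 : ((‖φ k‖ ^ 2 : ℝ) : 𝕜) = 1 := by
      push_cast
      rw [← inner_self_eq_norm_sq_to_K, h]
    exact_mod_cast h2
  have hrepr : ∀ j i : Fin s, b.repr (b j) i = if i = j then (1:𝕜) else 0 := by
    intro j i
    rw [Module.Basis.repr_self, Finsupp.single_apply]
    by_cases h : i = j
    · simp [h]
    · simp [h, Ne.symm h]
  -- expansion of w j
  have hw : ∀ j, w j = ∑ k : Fin s, ((σ (k:ℕ) : 𝕜) * (starRingEnd 𝕜) (F k j)) • φ (k:ℕ) := by
    intro j
    have h1 : K (b j) = (γ j : 𝕜) • w j := by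
      rw [hK (b j), Finset.sum_eq_single j]
      · rw [hrepr j j, if_pos rfl, mul_one]
      · intro i _ hij
        rw [hrepr j i, if_neg hij]
        simp
      · intro h; exact absurd (Finset.mem_univ j) h
    have hfb : ∀ k : Fin s, (inner 𝕜 (f k) (b j) : 𝕜) = (γ j : 𝕜) * (starRingEnd 𝕜) (F k j) := by
      intro k
      rw [hinner (f k) (b j), Finset.sum_eq_single j]
      · rw [hrepr j j, if_pos rfl, mul_one]
      · intro i _ hij
        rw [hrepr j i, if_neg hij]
        simp
      · intro h; exact absurd (Finset.mem_univ j) h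
    have h2 : K (b j) = (γ j : 𝕜) • ∑ k : Fin s, ((σ (k:ℕ) : 𝕜) * (starRingEnd 𝕜) (F k j)) • φ (k:ℕ) := by
      rw [hSVD (b j), Finset.smul_sum]
      refine Finset.sum_congr rfl fun k _ => ?_
      rw [hfb k, mul_left_comm, mul_smul]
    have hγj : (γ j : 𝕜) ≠ 0 := by
      simp only [ne_eq, RCLike.ofReal_eq_zero]
      exact (hγ j).ne'
    exact smul_right_injective X hγj (h1.symm.trans h2)
  -- weighted norm of w
  have hwsum : ∑ j, γ j * ‖w j‖ ^ 2 = ∑ k : Fin s, σ (k:ℕ) ^ 2 := by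
    calc ∑ j, γ j * ‖w j‖ ^ 2
        = ∑ j, γ j * ‖∑ k : Fin s, ((σ (k:ℕ) : 𝕜) * (starRingEnd 𝕜) (F k j)) • φ (k:ℕ)‖ ^ 2 := by
          refine Finset.sum_congr rfl fun j _ => by rw [← hw j]
      _ = ∑ k : Fin s, ‖(σ (k:ℕ) : 𝕜)‖ ^ 2 * ‖φ (k:ℕ)‖ ^ 2 :=
          podKey γ F H (fun k => (σ (k:ℕ) : 𝕜)) (fun k => φ (k:ℕ))
      _ = ∑ k : Fin s, σ (k:ℕ) ^ 2 := by
          refine Finset.sum_congr rfl fun k _ => ?_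
          rcases (hσnn (k:ℕ)).eq_or_lt with h0 | hpos
          · rw [← h0]; simp
          · rw [hφnorm _ hpos, RCLike.norm_ofReal, mul_one, sq_abs]
  -- scalar projection lemma
  have hscal : ∀ ψ : X, ∑ j, γ j * ‖(inner 𝕜 ψ (w j) : 𝕜)‖ ^ 2
      = ∑ k : Fin s, σ (k:ℕ) ^ 2 * ‖(inner 𝕜 ψ (φ (k:ℕ)) : 𝕜)‖ ^ 2 := by
    intro ψ
    have hp := podKey (X := 𝕜) γ F H (fun k => (σ (k:ℕ) : 𝕜)) (fun k => (inner 𝕜 ψ (φ (k:ℕ)) : 𝕜))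
    have hrw : ∀ j : Fin s,
        ∑ k : Fin s, ((σ (k:ℕ) : 𝕜) * (starRingEnd 𝕜) (F k j)) • (inner 𝕜 ψ (φ (k:ℕ)) : 𝕜)
        = (inner 𝕜 ψ (w j) : 𝕜) := by
      intro j
      rw [hw j, inner_sum]
      refine Finset.sum_congr rfl fun k _ => ?_
      rw [inner_smul_right, smul_eq_mul]
    rw [Finset.sum_congr rfl (fun j _ => by rw [hrw j])] at hp
    rw [hp]
    refine Finset.sum_congr rfl fun k _ => ?_
    rw [RCLike.norm_ofReal, sq_abs]
  -- Part 2 (equality)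
  have part2 : ∑ j, γ j * ‖w j -
          ∑ k : Fin s, (if (k : ℕ) < r then
            ((σ (k : ℕ) : 𝕜) * (starRingEnd 𝕜) (F k j)) • φ (k : ℕ) else 0)‖ ^ 2
        = ∑ k : Fin s, if r ≤ (k : ℕ) then σ (k : ℕ) ^ 2 else 0 := by
    have hdiff : ∀ j, w j - ∑ k : Fin s, (if (k : ℕ) < r then
          ((σ (k : ℕ) : 𝕜) * (starRingEnd 𝕜) (F k j)) • φ (k : ℕ) else 0)
        = ∑ k : Fin s, ((if r ≤ (k:ℕ) then (σ (k:ℕ) : 𝕜) else 0) * (starRingEnd 𝕜) (F k j)) • φ (k:ℕ) := by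
      intro j
      rw [hw j, ← Finset.sum_sub_distrib]
      refine Finset.sum_congr rfl fun k _ => ?_
      by_cases hk : (k:ℕ) < r
      · rw [if_pos hk, if_neg (Nat.not_le.mpr hk)]
        simp
      · rw [if_neg hk, if_pos (Nat.not_lt.mp hk)]
        simp
    calc ∑ j, γ j * ‖w j - ∑ k : Fin s, (if (k : ℕ) < r then
            ((σ (k : ℕ) : 𝕜) * (starRingEnd 𝕜) (F k j)) • φ (k : ℕ) else 0)‖ ^ 2
        = ∑ j, γ j * ‖∑ k : Fin s,
            ((if r ≤ (k:ℕ) then (σ (k:ℕ) : 𝕜) else 0) * (starRingEnd 𝕜) (F k j)) • φ (k:ℕ)‖ ^ 2 := by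
          refine Finset.sum_congr rfl fun j _ => by rw [hdiff j]
      _ = ∑ k : Fin s, ‖if r ≤ (k:ℕ) then (σ (k:ℕ) : 𝕜) else 0‖ ^ 2 * ‖φ (k:ℕ)‖ ^ 2 :=
          podKey γ F H _ _
      _ = ∑ k : Fin s, (if r ≤ (k : ℕ) then σ (k : ℕ) ^ 2 else 0) := by
          refine Finset.sum_congr rfl fun k _ => ?_
          by_cases hk : r ≤ (k:ℕ)
          · rw [if_pos hk, if_pos hk]
            rcases (hσnn (k:ℕ)).eq_or_lt with h0 | hpos
            · rw [← h0]; simp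
            · rw [hφnorm _ hpos, RCLike.norm_ofReal, mul_one, sq_abs]
          · rw [if_neg hk, if_neg hk]; simp
  refine ⟨?_, part2⟩
  -- Part 1 (optimality)
  intro a sv η
  set z : Fin s → X := fun j => ∑ k : Fin r, (a k * b.repr (sv k) j) • η k with hz
  set V : Submodule 𝕜 X := Submodule.span 𝕜 (Set.range η) with hV
  haveI : FiniteDimensional 𝕜 V := FiniteDimensional.span_of_finite 𝕜 (Set.finite_range η)
  set m := Module.finrank 𝕜 V with hmdef
  have hm : m ≤ r := by
    have h := finrank_range_le_card (R := 𝕜) η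
    simpa [Set.finrank, hmdef, hV] using h
  set ψ0 := stdOrthonormalBasis 𝕜 V with hψ0
  set ψ : Fin m → X := fun i => (ψ0 i : X) with hψdef
  have hψON : Orthonormal 𝕜 ψ := by
    rw [orthonormal_iff_ite]
    intro i l
    have h := orthonormal_iff_ite.mp ψ0.orthonormal i l
    rwa [Submodule.coe_inner] at h
  have hψV : ∀ i, ψ i ∈ V := fun i => (ψ0 i).2
  set q : Fin s → X := fun j => ∑ i, (inner 𝕜 (ψ i) (w j) : 𝕜) • ψ i with hq
  have hqV : ∀ j, q j ∈ V := fun j => Submodule.sum_mem _ fun i _ => Submodule.smul_mem _ _ (hψV i)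
  have hzV : ∀ j, z j ∈ V := fun j => Submodule.sum_mem _ fun k _ =>
    Submodule.smul_mem _ _ (Submodule.subset_span ⟨k, rfl⟩)
  have hperp : ∀ j i, (inner 𝕜 (ψ i) (w j - q j) : 𝕜) = 0 := by
    intro j i
    rw [inner_sub_right, hψON.inner_right_fintype]
    ring
  have hperpV : ∀ j, ∀ v ∈ V, (inner 𝕜 (w j - q j) v : 𝕜) = 0 := by
    intro j v hv
    have hv' : v = ∑ i, (ψ0.repr ⟨v, hv⟩ i) • ψ i := by
      calc v = ((⟨v, hv⟩ : V) : X) := rfl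
        _ = ((∑ i, ψ0.repr ⟨v, hv⟩ i • ψ0 i : V) : X) := by rw [ψ0.sum_repr]
        _ = ∑ i, (ψ0.repr ⟨v, hv⟩ i) • ψ i := by
            push_cast
            rfl
    rw [hv', inner_sum]
    refine Finset.sum_eq_zero fun i _ => ?_
    rw [inner_smul_right, ← inner_conj_symm, hperp j i]
    simp
  have hple : ∀ j, ‖w j‖ ^ 2 - ‖q j‖ ^ 2 ≤ ‖w j - z j‖ ^ 2 := by
    intro j
    have e1 : w j - z j = (w j - q j) + (q j - z j) := by abel
    have e2 : ‖w j - z j‖ ^ 2 = ‖w j - q j‖ ^ 2 + ‖q j - z j‖ ^ 2 := by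
      rw [e1, norm_add_sq (𝕜 := 𝕜), hperpV j _ (Submodule.sub_mem V (hqV j) (hzV j))]
      simp
    have e3 : ‖w j‖ ^ 2 = ‖w j - q j‖ ^ 2 + ‖q j‖ ^ 2 := by
      have e4 : w j = (w j - q j) + q j := by abel
      conv_lhs => rw [e4]
      rw [norm_add_sq (𝕜 := 𝕜), hperpV j _ (hqV j)]
      simp
    nlinarith [sq_nonneg ‖q j - z j‖]
  have hqnorm : ∀ j, ‖q j‖ ^ 2 = ∑ i, ‖(inner 𝕜 (ψ i) (w j) : 𝕜)‖ ^ 2 := fun j =>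
    podNormSum hψON _
  set d : Fin s → ℝ := fun k => ∑ i, ‖(inner 𝕜 (ψ i) (φ (k:ℕ)) : 𝕜)‖ ^ 2 with hd
  have hT : ∑ j, γ j * ‖q j‖ ^ 2 = ∑ k : Fin s, σ (k:ℕ) ^ 2 * d k := by
    calc ∑ j, γ j * ‖q j‖ ^ 2
        = ∑ j, ∑ i, γ j * ‖(inner 𝕜 (ψ i) (w j) : 𝕜)‖ ^ 2 := by
          refine Finset.sum_congr rfl fun j _ => by rw [hqnorm j, Finset.mul_sum]
      _ = ∑ i, ∑ j, γ j * ‖(inner 𝕜 (ψ i) (w j) : 𝕜)‖ ^ 2 := Finset.sum_comm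
      _ = ∑ i, ∑ k : Fin s, σ (k:ℕ) ^ 2 * ‖(inner 𝕜 (ψ i) (φ (k:ℕ)) : 𝕜)‖ ^ 2 :=
          Finset.sum_congr rfl fun i _ => hscal (ψ i)
      _ = ∑ k : Fin s, ∑ i, σ (k:ℕ) ^ 2 * ‖(inner 𝕜 (ψ i) (φ (k:ℕ)) : 𝕜)‖ ^ 2 := Finset.sum_comm
      _ = ∑ k : Fin s, σ (k:ℕ) ^ 2 * d k := by
          refine Finset.sum_congr rfl fun k _ => by rw [hd, Finset.mul_sum]
  have hd0 : ∀ k, 0 ≤ d k := fun k => Finset.sum_nonneg fun i _ => sq_nonneg _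
  have hd1 : ∀ k : Fin s, 0 < σ (k:ℕ) → d k ≤ 1 := by
    intro k hk
    have h := hψON.sum_inner_products_le (s := Finset.univ) (φ (k:ℕ))
    rw [hφnorm _ hk] at h
    exact h
  set P : Finset (Fin s) := Finset.univ.filter (fun k => 0 < σ (k:ℕ)) with hP
  have hΦON : Orthonormal 𝕜 (fun p : {k : Fin s // 0 < σ (k:ℕ)} => φ ((p : Fin s) : ℕ)) := by
    rw [orthonormal_iff_ite]
    intro p p'
    rw [hφON _ _ p.2 p'.2]
    by_cases h : p = p'
    · simp [h]
    · have hne : ((p : Fin s) : ℕ) ≠ ((p' : Fin s) : ℕ) := by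
        intro he
        exact h (Subtype.ext (Fin.ext he))
      simp [h, hne]
  have hdP : ∑ k ∈ P, d k ≤ (m : ℝ) := by
    calc ∑ k ∈ P, d k = ∑ i, ∑ k ∈ P, ‖(inner 𝕜 (ψ i) (φ (k:ℕ)) : 𝕜)‖ ^ 2 := Finset.sum_comm
      _ ≤ ∑ _i : Fin m, (1:ℝ) := by
          refine Finset.sum_le_sum fun i _ => ?_
          have hsub : ∑ k ∈ P, ‖(inner 𝕜 (ψ i) (φ (k:ℕ)) : 𝕜)‖ ^ 2
              = ∑ p : {k : Fin s // 0 < σ (k:ℕ)}, ‖(inner 𝕜 (ψ i) (φ ((p : Fin s):ℕ)) : 𝕜)‖ ^ 2 :=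
            Finset.sum_subtype P (fun k => by simp [hP]) _
          rw [hsub]
          have hb := hΦON.sum_inner_products_le (s := Finset.univ) (ψ i)
          rw [hψON.1 i, one_pow] at hb
          calc ∑ p : {k : Fin s // 0 < σ (k:ℕ)}, ‖(inner 𝕜 (ψ i) (φ ((p : Fin s):ℕ)) : 𝕜)‖ ^ 2
              = ∑ p : {k : Fin s // 0 < σ (k:ℕ)}, ‖(inner 𝕜 (φ ((p : Fin s):ℕ)) (ψ i) : 𝕜)‖ ^ 2 :=
                Finset.sum_congr rfl fun p _ => by rw [norm_inner_symm]
            _ ≤ 1 := hb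
      _ = (m : ℝ) := by simp
  -- T ≤ B
  have hTP : ∑ k : Fin s, σ (k:ℕ) ^ 2 * d k = ∑ k ∈ P, σ (k:ℕ) ^ 2 * d k := by
    symm
    apply Finset.sum_subset (Finset.subset_univ _)
    intro k _ hk
    have h0 : σ (k:ℕ) = 0 := by
      by_contra h
      exact hk (by simp [hP, lt_of_le_of_ne (hσnn _) (Ne.symm h)])
    rw [h0]
    ring
  have hB : ∑ k : Fin s, σ (k:ℕ) ^ 2 * d k
      ≤ ∑ k : Fin s, (if (k:ℕ) < r then σ (k:ℕ) ^ 2 else 0) := by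
    rcases (hσnn r).eq_or_lt with h0 | hpos
    · have hPsub : P ⊆ Finset.univ.filter (fun k : Fin s => (k:ℕ) < r) := by
        intro k hk
        simp only [hP, Finset.mem_filter, Finset.mem_univ, true_and] at hk ⊢
        by_contra hkr
        have hle : σ (k:ℕ) ≤ σ r := hσmono (Nat.not_lt.mp hkr)
        rw [← h0] at hle
        exact absurd hk (not_lt.mpr hle)
      calc ∑ k : Fin s, σ (k:ℕ) ^ 2 * d k = ∑ k ∈ P, σ (k:ℕ) ^ 2 * d k := hTP
        _ ≤ ∑ k ∈ P, σ (k:ℕ) ^ 2 := by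
            refine Finset.sum_le_sum fun k hk => ?_
            have hσk : 0 < σ (k:ℕ) := by simpa [hP] using hk
            exact mul_le_of_le_one_right (sq_nonneg _) (hd1 k hσk)
        _ ≤ ∑ k ∈ Finset.univ.filter (fun k : Fin s => (k:ℕ) < r), σ (k:ℕ) ^ 2 :=
            Finset.sum_le_sum_of_subset_of_nonneg hPsub (fun k _ _ => sq_nonneg _)
        _ = ∑ k : Fin s, (if (k:ℕ) < r then σ (k:ℕ) ^ 2 else 0) := Finset.sum_filter _ _
    · have hrs : r < s := by
        by_contra h
        rw [hσs r (Nat.not_lt.mp h)] at hpos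
        exact lt_irrefl 0 hpos
      set t := σ r ^ 2 with ht
      have htpos : 0 < t := pow_pos hpos 2
      have hsub2 : Finset.univ.filter (fun k : Fin s => (k:ℕ) < r) ⊆ P := by
        intro k hk
        simp only [Finset.mem_filter, Finset.mem_univ, true_and] at hk
        simp only [hP, Finset.mem_filter, Finset.mem_univ, true_and]
        exact lt_of_lt_of_le hpos (hσmono hk.le)
      have hsplit : ∀ k ∈ P, σ (k:ℕ) ^ 2 * d k
          ≤ (if (k:ℕ) < r then σ (k:ℕ) ^ 2 - t else 0) + t * d k := by
        intro k hk
        have hdk0 := hd0 k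
        have hσk : 0 < σ (k:ℕ) := by simpa [hP] using hk
        have hdk1 := hd1 k hσk
        by_cases hkr : (k:ℕ) < r
        · rw [if_pos hkr]
          have hle : σ r ≤ σ (k:ℕ) := hσmono hkr.le
          have hsq : t ≤ σ (k:ℕ) ^ 2 := by
            rw [ht]
            exact pow_le_pow_left₀ (hσnn r) hle 2
          have hmul : (σ (k:ℕ) ^ 2 - t) * d k ≤ σ (k:ℕ) ^ 2 - t :=
            mul_le_of_le_one_right (by linarith) hdk1
          have hexp : σ (k:ℕ) ^ 2 * d k = (σ (k:ℕ) ^ 2 - t) * d k + t * d k := by ring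
          linarith
        · rw [if_neg hkr]
          have hle : σ (k:ℕ) ≤ σ r := hσmono (Nat.not_lt.mp hkr)
          have hsq : σ (k:ℕ) ^ 2 ≤ t := by
            rw [ht]
            exact pow_le_pow_left₀ (hσnn _) hle 2
          have hmul : σ (k:ℕ) ^ 2 * d k ≤ t * d k := mul_le_mul_of_nonneg_right hsq hdk0
          linarith
      have hfilterP : ∑ k ∈ P, (if (k:ℕ) < r then σ (k:ℕ) ^ 2 - t else 0)
          = ∑ k : Fin s, (if (k:ℕ) < r then σ (k:ℕ) ^ 2 - t else 0) := by
        apply Finset.sum_subset (Finset.subset_univ _)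
        intro k _ hk
        rw [if_neg]
        intro hkr
        exact hk (hsub2 (by simp [hkr]))
      have hcard : (Finset.univ.filter (fun k : Fin s => (k:ℕ) < r)).card = r := by
        have heq : (Finset.univ.filter (fun k : Fin s => (k:ℕ) < r))
            = Finset.map ⟨Fin.castLE hrs.le, Fin.castLE_injective _⟩ Finset.univ := by
          ext k
          simp only [Finset.mem_filter, Finset.mem_univ, true_and, Finset.mem_map,
            Function.Embedding.coeFn_mk]
          constructor
          · intro hk
            exact ⟨⟨(k:ℕ), hk⟩, Fin.ext rfl⟩
          · rintro ⟨i, rfl⟩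
            exact i.2
        rw [heq, Finset.card_map, Finset.card_univ, Fintype.card_fin]
      have hshift : ∑ k : Fin s, (if (k:ℕ) < r then σ (k:ℕ) ^ 2 - t else 0)
          = ∑ k : Fin s, (if (k:ℕ) < r then σ (k:ℕ) ^ 2 else 0) - r * t := by
        rw [← Finset.sum_filter, ← Finset.sum_filter, Finset.sum_sub_distrib,
          Finset.sum_const, hcard, nsmul_eq_mul]
      calc ∑ k : Fin s, σ (k:ℕ) ^ 2 * d k = ∑ k ∈ P, σ (k:ℕ) ^ 2 * d k := hTP
        _ ≤ ∑ k ∈ P, ((if (k:ℕ) < r then σ (k:ℕ) ^ 2 - t else 0) + t * d k) :=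
            Finset.sum_le_sum hsplit
        _ = ∑ k ∈ P, (if (k:ℕ) < r then σ (k:ℕ) ^ 2 - t else 0) + t * ∑ k ∈ P, d k := by
            rw [Finset.sum_add_distrib, Finset.mul_sum]
        _ ≤ ∑ k : Fin s, (if (k:ℕ) < r then σ (k:ℕ) ^ 2 - t else 0) + t * r := by
            rw [hfilterP]
            have : t * ∑ k ∈ P, d k ≤ t * r := by
              apply mul_le_mul_of_nonneg_left _ htpos.le
              exact hdP.trans (by exact_mod_cast Nat.cast_le.mpr hm)
            linarith
        _ = ∑ k : Fin s, (if (k:ℕ) < r then σ (k:ℕ) ^ 2 else 0) := by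
            rw [hshift]
            ring
  -- combine everything
  have hzineq : ∑ k : Fin s, σ (k:ℕ) ^ 2 - ∑ j, γ j * ‖q j‖ ^ 2
      ≤ ∑ j, γ j * ‖w j - z j‖ ^ 2 := by
    have h1 : ∀ j, γ j * ‖w j‖ ^ 2 - γ j * ‖q j‖ ^ 2 ≤ γ j * ‖w j - z j‖ ^ 2 := by
      intro j
      have h2 := mul_le_mul_of_nonneg_left (hple j) (hγ j).le
      rw [mul_sub] at h2
      exact h2
    calc ∑ k : Fin s, σ (k:ℕ) ^ 2 - ∑ j, γ j * ‖q j‖ ^ 2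
        = ∑ j, (γ j * ‖w j‖ ^ 2 - γ j * ‖q j‖ ^ 2) := by
          rw [Finset.sum_sub_distrib, hwsum]
      _ ≤ ∑ j, γ j * ‖w j - z j‖ ^ 2 := Finset.sum_le_sum fun j _ => h1 j
  have hsplitσ : ∑ k : Fin s, σ (k:ℕ) ^ 2
      = ∑ k : Fin s, (if (k:ℕ) < r then σ (k:ℕ) ^ 2 else 0)
        + ∑ k : Fin s, (if r ≤ (k:ℕ) then σ (k:ℕ) ^ 2 else 0) := by
    rw [← Finset.sum_add_distrib]
    refine Finset.sum_congr rfl fun k _ => ?_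
    by_cases h : (k:ℕ) < r
    · rw [if_pos h, if_neg (Nat.not_le.mpr h), add_zero]
    · rw [if_neg h, if_pos (Nat.not_lt.mp h), zero_add]
  have final : ∑ k : Fin s, (if r ≤ (k:ℕ) then σ (k:ℕ) ^ 2 else 0)
      ≤ ∑ j, γ j * ‖w j - z j‖ ^ 2 := by
    have hq2 : ∑ j, γ j * ‖q j‖ ^ 2 ≤ ∑ k : Fin s, (if (k:ℕ) < r then σ (k:ℕ) ^ 2 else 0) := by
      rw [hT]
      exact hB
    linarith
  exact final
end
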